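/- arXiv:1910.05269 — 9 statements merged into one kernel-verified Lean document; each statement's English description precedes it below -/
import Mathlib

section
/- Let f_j(z) = z^j for 0 ≤ j ≤ N, let K = (K₁,K₂) ∈ ℝ², and let z ∈ ℂ with |z| < 1. Writing B(z) = 1/(1 − |z|²), the density function satisfies lim_{N→∞} h_{N,K}(z) = (1/π) · exp(−(K₁²+K₂²)/(2·B(z))) · B(z) · [ B(z) + ((K₁²+K₂²)/2)·|z|² ]. -/
open Finset

/-- The kernel `B₀,N(z) = ∑ |f_j(z)|²`. -/
noncomputable def B0 (f : ℕ → ℂ → ℂ) (N : ℕ) (z : ℂ) : ℝ :=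
  ∑ j ∈ Finset.range (N + 1), ‖f j z‖ ^ 2

/-- The kernel `B₁,N(z) = ∑ conj(f_j(z))·f_j′(z)`. -/
noncomputable def B1 (f : ℕ → ℂ → ℂ) (N : ℕ) (z : ℂ) : ℂ :=
  ∑ j ∈ Finset.range (N + 1), (starRingEnd ℂ) (f j z) * deriv (f j) z

/-- The kernel `B₂,N(z) = ∑ |f_j′(z)|²`. -/
noncomputable def B2 (f : ℕ → ℂ → ℂ) (N : ℕ) (z : ℂ) : ℝ :=
  ∑ j ∈ Finset.range (N + 1), ‖deriv (f j) z‖ ^ 2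

/-- The density `h_{N,K}(z)` of complex zeros of `∑ η_j f_j(z) = K₁ + i K₂`. -/
noncomputable def hDen (f : ℕ → ℂ → ℂ) (N : ℕ) (K₁ K₂ : ℝ) (z : ℂ) : ℝ :=
  Real.exp (-(K₁ ^ 2 + K₂ ^ 2) / (2 * B0 f N z)) / (Real.pi * B0 f N z) *
    (B2 f N z - ‖B1 f N z‖ ^ 2 / B0 f N z *
      (1 - (K₁ ^ 2 + K₂ ^ 2) / (2 * B0 f N z)))


open Filter Topology

lemma geom_s1 {ρ : ℝ} (h0 : 0 ≤ ρ) (h1 : ρ < 1) :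
    HasSum (fun j : ℕ => (j : ℝ) * ρ ^ (j - 1)) (1 / (1 - ρ) ^ 2) := by
  have hn : ‖ρ‖ < 1 := by rwa [Real.norm_eq_abs, abs_of_nonneg h0]
  have h := hasSum_choose_mul_geometric_of_norm_lt_one (𝕜 := ℝ) 1 hn
  have hc : HasSum (fun n : ℕ => ((n + 1 : ℕ) : ℝ) * ρ ^ ((n + 1 : ℕ) - 1))
      (1 / (1 - ρ) ^ 2) := by
    convert h using 2 with n
    · rfl
    simp [Nat.choose_one_right]
  have h' := (hasSum_nat_add_iff (f := fun j : ℕ => (j : ℝ) * ρ ^ (j - 1)) 1).1 hc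
  simpa using h'

lemma geom_s2 {ρ : ℝ} (h0 : 0 ≤ ρ) (h1 : ρ < 1) :
    HasSum (fun j : ℕ => (j : ℝ) ^ 2 * ρ ^ (j - 1)) ((1 + ρ) / (1 - ρ) ^ 3) := by
  have hn : ‖ρ‖ < 1 := by rwa [Real.norm_eq_abs, abs_of_nonneg h0]
  have hne : (1 : ℝ) - ρ ≠ 0 := sub_ne_zero.2 (ne_of_gt h1)
  have h2 := hasSum_choose_mul_geometric_of_norm_lt_one (𝕜 := ℝ) 2 hn
  have h1' := hasSum_choose_mul_geometric_of_norm_lt_one (𝕜 := ℝ) 1 hn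
  have key : ∀ n : ℕ, ((n + 2).choose 2 : ℝ) * 2 = (n + 1) * (n + 2) := by
    intro n
    have h : 2 ∣ (n + 1) * (n + 2) := (Nat.even_mul_succ_self (n + 1)).two_dvd
    have : (n + 2).choose 2 * 2 = (n + 1) * (n + 2) := by
      rw [Nat.choose_two_right]
      have e : (n + 2) * (n + 2 - 1) = (n + 1) * (n + 2) := by
        rw [show n + 2 - 1 = n + 1 from rfl]; ring
      rw [e, Nat.div_mul_cancel h]
    exact_mod_cast this
  have hc : HasSum (fun n : ℕ => ((n + 1 : ℕ) : ℝ) ^ 2 * ρ ^ ((n + 1 : ℕ) - 1))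
      (2 * (1 / (1 - ρ) ^ (2 + 1)) - 1 / (1 - ρ) ^ (1 + 1)) := by
    convert (h2.mul_left 2).sub h1' using 2 with n
    · rfl
    rw [Nat.choose_one_right]
    push_cast
    linear_combination (-(ρ ^ n)) * key n
  have h' := (hasSum_nat_add_iff (f := fun j : ℕ => (j : ℝ) ^ 2 * ρ ^ (j - 1)) 1).1 hc
  simp only [Finset.range_one, Finset.sum_singleton, Nat.cast_zero] at h'
  norm_num at h'
  convert h' using 1
  · rfl
  field_simp
  ring



/-- Theorem (limit for monomials, `|z| < 1`): with `f_j(z) = z^j` and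
`B(z) = 1/(1-|z|²)`,
`lim_N h_{N,K}(z) = (1/π) e^{-(K₁²+K₂²)/(2B(z))} B(z) (B(z) + ((K₁²+K₂²)/2)|z|²)`. -/
theorem density_limit_monomials (K₁ K₂ : ℝ) (z : ℂ) (hz : ‖z‖ < 1) :
    Tendsto (fun N : ℕ => hDen (fun j w => w ^ j) N K₁ K₂ z) atTop
      (𝓝 (1 / Real.pi *
        Real.exp (-(K₁ ^ 2 + K₂ ^ 2) / (2 * (1 / (1 - ‖z‖ ^ 2)))) *
        (1 / (1 - ‖z‖ ^ 2)) *
        (1 / (1 - ‖z‖ ^ 2) +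
          (K₁ ^ 2 + K₂ ^ 2) / 2 * ‖z‖ ^ 2))) := by
  set f : ℕ → ℂ → ℂ := fun j w => w ^ j with hf
  set ρ : ℝ := ‖z‖ ^ 2 with hρ
  have h0ρ : 0 ≤ ρ := sq_nonneg _
  have h1ρ : ρ < 1 := by
    have := norm_nonneg z
    nlinarith
  have hsub : (0:ℝ) < 1 - ρ := by linarith
  have hsubne : (1:ℝ) - ρ ≠ 0 := ne_of_gt hsub
  set A : ℝ := 1 / (1 - ρ) with hA
  have hApos : 0 < A := by positivity
  have hAne : A ≠ 0 := ne_of_gt hApos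
  have h2A : (2:ℝ) * A ≠ 0 := by positivity
  have hπA : Real.pi * A ≠ 0 := by positivity
  set S : ℝ := 1 / (1 - ρ) ^ 2 with hS
  set C : ℝ := (1 + ρ) / (1 - ρ) ^ 3 with hC
  -- pointwise identifications of the kernels
  have hB0eq : ∀ N, B0 f N z = ∑ j ∈ Finset.range (N + 1), ρ ^ j := by
    intro N
    unfold B0
    refine Finset.sum_congr rfl fun j _ => ?_
    simp only [hf, norm_pow]
    ring
  have hB2eq : ∀ N, B2 f N z = ∑ j ∈ Finset.range (N + 1), (j : ℝ) ^ 2 * ρ ^ (j - 1) := by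
    intro N
    unfold B2
    refine Finset.sum_congr rfl fun j _ => ?_
    simp only [hf, deriv_pow_field, norm_mul, norm_pow, Complex.norm_natCast]
    ring
  have hcz : ((ρ : ℝ) : ℂ) = (starRingEnd ℂ) z * z := by
    rw [hρ, mul_comm, Complex.mul_conj, Complex.normSq_eq_norm_sq]
  have hB1eq : ∀ N, B1 f N z =
      (starRingEnd ℂ) z * ((∑ j ∈ Finset.range (N + 1), (j : ℝ) * ρ ^ (j - 1) : ℝ) : ℂ) := by
    intro N
    unfold B1
    rw [Complex.ofReal_sum, Finset.mul_sum]
    refine Finset.sum_congr rfl fun j _ => ?_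
    rcases j with _ | n
    · simp [hf]
    · simp only [hf, deriv_pow_field, map_pow]
      push_cast
      rw [hcz]
      ring
  have hB1sq : ∀ N, ‖B1 f N z‖ ^ 2 =
      ρ * (∑ j ∈ Finset.range (N + 1), (j : ℝ) * ρ ^ (j - 1)) ^ 2 := by
    intro N
    rw [hB1eq N, norm_mul, mul_pow, Complex.norm_conj, Complex.norm_real, Real.norm_eq_abs, sq_abs, hρ]
  -- convergence of the three kernels
  have tB0 : Tendsto (fun N => B0 f N z) atTop (𝓝 A) := by
    have h := (hasSum_geometric_of_lt_one h0ρ h1ρ).tendsto_sum_nat.comp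
      (tendsto_add_atTop_nat 1)
    rw [hA, one_div]
    exact h.congr fun N => (hB0eq N).symm
  have tS1 : Tendsto (fun N => ∑ j ∈ Finset.range (N + 1), (j : ℝ) * ρ ^ (j - 1)) atTop
      (𝓝 S) :=
    (geom_s1 h0ρ h1ρ).tendsto_sum_nat.comp (tendsto_add_atTop_nat 1)
  have tB2 : Tendsto (fun N => B2 f N z) atTop (𝓝 C) := by
    have h := (geom_s2 h0ρ h1ρ).tendsto_sum_nat.comp (tendsto_add_atTop_nat 1)
    exact h.congr fun N => (hB2eq N).symm
  have tB1sq : Tendsto (fun N => ‖B1 f N z‖ ^ 2) atTop (𝓝 (ρ * (S * S))) := by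
    have h := (tendsto_const_nhds (x := ρ) (f := atTop (α := ℕ))).mul (tS1.mul tS1)
    refine h.congr fun N => ?_
    rw [hB1sq N]; ring
  -- combine
  have hq : Tendsto (fun N => -(K₁ ^ 2 + K₂ ^ 2) / (2 * B0 f N z)) atTop
      (𝓝 (-(K₁ ^ 2 + K₂ ^ 2) / (2 * A))) :=
    tendsto_const_nhds.div (tendsto_const_nhds.mul tB0) h2A
  have hexp : Tendsto (fun N => Real.exp (-(K₁ ^ 2 + K₂ ^ 2) / (2 * B0 f N z))) atTop
      (𝓝 (Real.exp (-(K₁ ^ 2 + K₂ ^ 2) / (2 * A)))) :=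
    (Real.continuous_exp.tendsto _).comp hq
  have T : Tendsto (fun N => hDen f N K₁ K₂ z) atTop
      (𝓝 (Real.exp (-(K₁ ^ 2 + K₂ ^ 2) / (2 * A)) / (Real.pi * A) *
        (C - ρ * (S * S) / A * (1 - (K₁ ^ 2 + K₂ ^ 2) / (2 * A))))) := by
    simp only [hDen]
    exact (hexp.div (tendsto_const_nhds.mul tB0) hπA).mul
      (tB2.sub ((tB1sq.div tB0 hAne).mul
        (tendsto_const_nhds.sub (tendsto_const_nhds.div (tendsto_const_nhds.mul tB0) h2A))))
  convert T using 2
  rw [hA, hS, hC]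
  field_simp
  ring
end

section
/- Let f_j(z) = z^j/√(j!) for 0 ≤ j ≤ N (the Weyl polynomials), and let K = (K₁,K₂) ∈ ℝ². Then for every z ∈ ℂ the density function satisfies lim_{N→∞} h_{N,K}(z) = (1/π) · exp(−(K₁²+K₂²)/(2·e^{|z|²})) · (1 + (K₁²+K₂²)·|z|²/(2·e^{|z|²})). In particular, for K = (0,0) the limit equals 1/π. -/
open Finset

open Filter Topology

section aux

lemma hasSum_exp_real (r : ℝ) : HasSum (fun n => r ^ n / n.factorial) (Real.exp r) := by
  rw [Real.exp_eq_exp_ℝ]; exact NormedSpace.expSeries_div_hasSum_exp r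

noncomputable def fW : ℕ → ℂ → ℂ := fun j w => w ^ j / (Real.sqrt (Nat.factorial j) : ℂ)

noncomputable def EP (r : ℝ) (N : ℕ) : ℝ := ∑ j ∈ Finset.range N, r ^ j / j.factorial

lemma EP_tendsto (r : ℝ) : Tendsto (EP r) atTop (𝓝 (Real.exp r)) :=
  (hasSum_exp_real r).tendsto_sum_nat

lemma deriv_fW (j : ℕ) (z : ℂ) :
    deriv (fW j) z = j * z ^ (j - 1) / (Real.sqrt (Nat.factorial j) : ℂ) := by
  show deriv (fun w => w ^ j / (Real.sqrt (Nat.factorial j) : ℂ)) z = _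
  simp [deriv_div_const, deriv_pow]

lemma abs_fW_sq (j : ℕ) (z : ℂ) :
    ‖fW j z‖ ^ 2 = (‖z‖ ^ 2) ^ j / j.factorial := by
  rw [show fW j z = z ^ j / (Real.sqrt (Nat.factorial j) : ℂ) from rfl,
    norm_div, norm_pow, div_pow, Complex.norm_real, Real.norm_eq_abs,
    abs_of_nonneg (Real.sqrt_nonneg _), Real.sq_sqrt (by positivity), ← pow_mul, ← pow_mul,
    Nat.mul_comm]

lemma B0_eq (N : ℕ) (z : ℂ) : B0 fW N z = EP (‖z‖ ^ 2) (N + 1) :=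
  Finset.sum_congr rfl fun j _ => abs_fW_sq j z

lemma conj_mul_self (z : ℂ) :
    (starRingEnd ℂ) z * z = ((‖z‖ ^ 2 : ℝ) : ℂ) := by
  rw [Complex.sq_norm, Complex.normSq_eq_conj_mul_self]

lemma B1_term (k : ℕ) (z : ℂ) :
    (starRingEnd ℂ) (fW (k + 1) z) * deriv (fW (k + 1)) z
      = (starRingEnd ℂ) z * (((‖z‖ ^ 2) ^ k / k.factorial : ℝ) : ℂ) := by
  rw [deriv_fW, show fW (k + 1) z = z ^ (k + 1) / (Real.sqrt (Nat.factorial (k + 1)) : ℂ) from rfl]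
  simp only [map_div₀, map_pow, Complex.conj_ofReal, Nat.add_sub_cancel]
  rw [div_mul_div_comm, ← Complex.ofReal_mul, Real.mul_self_sqrt (by positivity),
    Complex.ofReal_div, Complex.ofReal_pow, ← conj_mul_self]
  have hk1 : ((k : ℂ) + 1) ≠ 0 := by
    norm_cast
  have hfac : ((((k + 1).factorial : ℕ) : ℝ) : ℂ) = ((k : ℂ) + 1) * ((k.factorial : ℝ) : ℂ) := by
    rw [Nat.factorial_succ]; push_cast; ring
  rw [hfac, show (starRingEnd ℂ) z ^ (k + 1) * (((k + 1 : ℕ) : ℂ) * z ^ k)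
      = ((k : ℂ) + 1) * ((starRingEnd ℂ) z * ((starRingEnd ℂ) z * z) ^ k) from by
        push_cast; ring,
    mul_div_mul_left _ _ hk1, mul_div_assoc]

lemma term_zero (z : ℂ) : deriv (fW 0) z = 0 := by
  rw [deriv_fW]; simp

lemma B1_eq (N : ℕ) (z : ℂ) :
    B1 fW N z = (starRingEnd ℂ) z * ((EP (‖z‖ ^ 2) N : ℝ) : ℂ) := by
  rw [B1, Finset.sum_range_succ', term_zero, mul_zero, add_zero]
  rw [Finset.sum_congr rfl fun k _ => B1_term k z, ← Finset.mul_sum]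
  congr 1
  rw [EP]
  push_cast
  rfl

lemma B2_term (k : ℕ) (z : ℂ) :
    ‖deriv (fW (k + 1)) z‖ ^ 2
      = ((k : ℝ) + 1) * (‖z‖ ^ 2) ^ k / k.factorial := by
  rw [deriv_fW]
  rw [norm_div, norm_mul, norm_pow, Complex.norm_real, Real.norm_eq_abs, Complex.norm_natCast,
    abs_of_nonneg (Real.sqrt_nonneg _), div_pow, mul_pow,
    Real.sq_sqrt (by positivity), Nat.add_sub_cancel, ← pow_mul, ← pow_mul, Nat.mul_comm]
  have hk1 : ((k : ℝ) + 1) ≠ 0 := by positivity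
  have hfk : ((k.factorial : ℕ) : ℝ) ≠ 0 := Nat.cast_ne_zero.mpr k.factorial_ne_zero
  have hfac : (((k + 1).factorial : ℕ) : ℝ) = ((k : ℝ) + 1) * (k.factorial : ℝ) := by
    rw [Nat.factorial_succ]; push_cast; ring
  rw [hfac]
  push_cast
  field_simp

lemma B2_eq (N : ℕ) (z : ℂ) :
    B2 fW N z = ∑ k ∈ Finset.range N,
      ((k : ℝ) + 1) * (‖z‖ ^ 2) ^ k / k.factorial := by
  rw [B2, Finset.sum_range_succ', term_zero]
  simp only [map_zero, norm_zero, ne_eq, OfNat.ofNat_ne_zero, not_false_eq_true, zero_pow, add_zero]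
  exact Finset.sum_congr rfl fun k _ => B2_term k z

lemma B2_tendsto (z : ℂ) :
    Tendsto (fun N => B2 fW N z) atTop
      (𝓝 ((‖z‖ ^ 2 + 1) * Real.exp (‖z‖ ^ 2))) := by
  set r := ‖z‖ ^ 2 with hr
  have hsplit : ∀ N, B2 fW N z = EP r N + ∑ k ∈ Finset.range N, (k : ℝ) * r ^ k / k.factorial := by
    intro N
    rw [B2_eq, EP, ← Finset.sum_add_distrib]
    exact Finset.sum_congr rfl fun k _ => by ring
  have hS1 : ∀ N, (∑ k ∈ Finset.range (N + 1), (k : ℝ) * r ^ k / k.factorial) = r * EP r N := by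
    intro N
    rw [Finset.sum_range_succ']
    simp only [Nat.cast_zero, zero_mul, pow_zero, zero_div, add_zero, Nat.cast_ofNat]
    rw [EP, Finset.mul_sum]
    refine Finset.sum_congr rfl fun k _ => ?_
    have hfac : (((k + 1).factorial : ℕ) : ℝ) = ((k : ℝ) + 1) * (k.factorial : ℝ) := by
      rw [Nat.factorial_succ]; push_cast; ring
    have hk1 : ((k : ℝ) + 1) ≠ 0 := by positivity
    have hfk : ((k.factorial : ℕ) : ℝ) ≠ 0 := Nat.cast_ne_zero.mpr k.factorial_ne_zero
    rw [hfac]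
    push_cast
    field_simp
    ring
  have hS : Tendsto (fun N => ∑ k ∈ Finset.range N, (k : ℝ) * r ^ k / k.factorial) atTop
      (𝓝 (r * Real.exp r)) := by
    rw [← tendsto_add_atTop_iff_nat 1]
    simp only [hS1]
    exact (EP_tendsto r).const_mul r
  have := (EP_tendsto r).add hS
  simp only [hsplit]
  convert this using 2
  ring

theorem main (K₁ K₂ : ℝ) (z : ℂ) :
    Tendsto
      (fun N : ℕ =>
        hDen (fun j w => w ^ j / (Real.sqrt (Nat.factorial j) : ℂ)) N K₁ K₂ z)
      atTop
      (𝓝 (1 / Real.pi *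
        Real.exp (-(K₁ ^ 2 + K₂ ^ 2) / (2 * Real.exp (‖z‖ ^ 2))) *
        (1 + (K₁ ^ 2 + K₂ ^ 2) * ‖z‖ ^ 2 /
          (2 * Real.exp (‖z‖ ^ 2))))) := by
  have hf : (fun j (w : ℂ) => w ^ j / (Real.sqrt (Nat.factorial j) : ℂ)) = fW := rfl
  rw [hf]
  set r := ‖z‖ ^ 2 with hrdef
  set E := Real.exp r with hE
  set c := K₁ ^ 2 + K₂ ^ 2 with hc
  have hEpos : 0 < E := Real.exp_pos r
  have hEne : E ≠ 0 := hEpos.ne'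
  have h0 : Tendsto (fun N => B0 fW N z) atTop (𝓝 E) := by
    simp only [B0_eq]
    exact (EP_tendsto r).comp (tendsto_add_atTop_nat 1)
  have h1 : Tendsto (fun N => ‖B1 fW N z‖ ^ 2) atTop (𝓝 (r * E ^ 2)) := by
    have habs : ∀ N, ‖B1 fW N z‖ ^ 2 = r * EP r N ^ 2 := by
      intro N
      rw [B1_eq, norm_mul, mul_pow, Complex.norm_real, Real.norm_eq_abs, sq_abs, Complex.norm_conj, hrdef]
    simp only [habs]
    exact ((EP_tendsto r).pow 2).const_mul r
  have h2 : Tendsto (fun N => B2 fW N z) atTop (𝓝 ((r + 1) * E)) := B2_tendsto z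
  have h2b : Tendsto (fun N => 2 * B0 fW N z) atTop (𝓝 (2 * E)) := h0.const_mul 2
  have hq : Tendsto (fun N => -c / (2 * B0 fW N z)) atTop (𝓝 (-c / (2 * E))) :=
    tendsto_const_nhds.div h2b (by positivity)
  have hq' : Tendsto (fun N => c / (2 * B0 fW N z)) atTop (𝓝 (c / (2 * E))) :=
    tendsto_const_nhds.div h2b (by positivity)
  have hexp : Tendsto (fun N => Real.exp (-c / (2 * B0 fW N z))) atTop
      (𝓝 (Real.exp (-c / (2 * E)))) := (Real.continuous_exp.tendsto _).comp hq
  have hfrac : Tendsto (fun N => Real.exp (-c / (2 * B0 fW N z)) / (Real.pi * B0 fW N z)) atTop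
      (𝓝 (Real.exp (-c / (2 * E)) / (Real.pi * E))) :=
    hexp.div (h0.const_mul Real.pi) (by positivity)
  have hinner : Tendsto (fun N => B2 fW N z - ‖B1 fW N z‖ ^ 2 / B0 fW N z *
      (1 - c / (2 * B0 fW N z))) atTop
      (𝓝 ((r + 1) * E - r * E ^ 2 / E * (1 - c / (2 * E)))) :=
    h2.sub (((h1.div h0 hEne)).mul (tendsto_const_nhds.sub hq'))
  have hfin := hfrac.mul hinner
  have hval : 1 / Real.pi * Real.exp (-c / (2 * E)) * (1 + c * r / (2 * E))
      = Real.exp (-c / (2 * E)) / (Real.pi * E) *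
        ((r + 1) * E - r * E ^ 2 / E * (1 - c / (2 * E))) := by
    field_simp
    ring
  rw [show (fun N : ℕ => hDen fW N K₁ K₂ z) = fun N =>
      Real.exp (-c / (2 * B0 fW N z)) / (Real.pi * B0 fW N z) *
        (B2 fW N z - ‖B1 fW N z‖ ^ 2 / B0 fW N z * (1 - c / (2 * B0 fW N z)))
    from rfl, hval]
  exact hfin

end aux

/-- Theorem (Weyl polynomials): with `f_j(z) = z^j/√(j!)`,
`lim_N h_{N,K}(z) = (1/π) e^{-(K₁²+K₂²)/(2e^{|z|²})} (1 + (K₁²+K₂²)|z|²/(2e^{|z|²}))`;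
in particular for `K = (0,0)` the limit is `1/π`. -/
theorem density_limit_weyl (K₁ K₂ : ℝ) (z : ℂ) :
    Tendsto
      (fun N : ℕ =>
        hDen (fun j w => w ^ j / (Real.sqrt (Nat.factorial j) : ℂ)) N K₁ K₂ z)
      atTop
      (𝓝 (1 / Real.pi *
        Real.exp (-(K₁ ^ 2 + K₂ ^ 2) / (2 * Real.exp (‖z‖ ^ 2))) *
        (1 + (K₁ ^ 2 + K₂ ^ 2) * ‖z‖ ^ 2 /
          (2 * Real.exp (‖z‖ ^ 2))))) ∧
    Tendsto
      (fun N : ℕ =>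
        hDen (fun j w => w ^ j / (Real.sqrt (Nat.factorial j) : ℂ)) N 0 0 z)
      atTop (𝓝 (1 / Real.pi)) := by
  refine ⟨main K₁ K₂ z, ?_⟩
  have := main 0 0 z
  simpa using this
end

section
/- Let N be a positive integer, z ∈ ℂ with z ≠ 0, and write t = |z|². Then the following three closed forms hold for the kernels of the root-binomial functions f_j(z) = √(C(N,j)/(j+1))·z^j: Σ_{j=0}^N C(N,j)·t^j/(j+1) = ((t+1)^{N+1} − 1)/((N+1)·t); Σ_{j=0}^N C(N,j)·j·t^j/((j+1)·z) = ((N·t − 1)·(t+1)^N + 1)/((N+1)·z·t); and Σ_{j=0}^N C(N,j)·j²·t^{j−1}/(j+1) = ((t+1)^N·(t·(N²·t − N + 1) + 1) − t − 1)/((N+1)·t²·(t+1)), where C(N,j) denotes the binomial coefficient. -/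
open Finset

lemma auxB0 {K : Type*} [CommRing K] (N : ℕ) (t : K) :
    ∑ j ∈ range (N+1), (N.choose j : K) * t^j = (t+1)^N := by
  rw [add_pow]
  exact Finset.sum_congr rfl (fun j _ => by ring)

lemma auxPeel {K : Type*} [CommRing K] (N : ℕ) (t : K) :
    ∑ j ∈ range (N+1), ((N+1).choose (j+1) : K) * t^(j+1) = (t+1)^(N+1) - 1 := by
  have h := auxB0 (N+1) t
  rw [Finset.sum_range_succ'] at h
  simp only [Nat.choose_zero_right, Nat.cast_one, pow_zero, mul_one, one_mul] at h
  linear_combination h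

lemma auxS0 {K : Type*} [Field K] [CharZero K] (N : ℕ) (t : K) (ht : t ≠ 0) :
    ∑ j ∈ range (N+1), (N.choose j : K) * t^j / ((j:K)+1)
      = ((t+1)^(N+1) - 1)/(((N:K)+1)*t) := by
  have key : ∀ j ∈ range (N+1), (N.choose j : K) * t^j / ((j:K)+1)
      = ((N+1).choose (j+1) : K) * t^(j+1) / ((((N:K)+1)) * t) := by
    intro j _
    have hc : ((N:K)+1) * (N.choose j : K) = ((N+1).choose (j+1) : K) * ((j:K)+1) := by
      exact_mod_cast congrArg (Nat.cast (R := K)) (Nat.add_one_mul_choose_eq N j)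
    have hj : ((j:K)+1) ≠ 0 := Nat.cast_add_one_ne_zero j
    have hN : ((N:K)+1) ≠ 0 := Nat.cast_add_one_ne_zero N
    field_simp
    linear_combination t^(j+1) * hc
  rw [Finset.sum_congr rfl key, ← Finset.sum_div, auxPeel]

lemma auxB1 {K : Type*} [CommRing K] (N : ℕ) (t : K) :
    ∑ j ∈ range (N+2), ((N+1).choose j : K) * (j:K) * t^j
      = ((N:K)+1)*t*(t+1)^N := by
  rw [Finset.sum_range_succ']
  have key : ∀ j ∈ range (N+1), ((N+1).choose (j+1) : K) * ((j:K)+1) * t^(j+1)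
      = ((N:K)+1) * t * ((N.choose j : K) * t^j) := by
    intro j _
    have hc : ((N:K)+1) * (N.choose j : K) = ((N+1).choose (j+1) : K) * ((j:K)+1) := by
      exact_mod_cast congrArg (Nat.cast (R := K)) (Nat.add_one_mul_choose_eq N j)
    calc ((N+1).choose (j+1) : K) * ((j:K)+1) * t^(j+1)
        = (((N+1).choose (j+1) : K) * ((j:K)+1)) * t^(j+1) := by ring
      _ = (((N:K)+1) * (N.choose j : K)) * t^(j+1) := by rw [hc]
      _ = ((N:K)+1) * t * ((N.choose j : K) * t^j) := by ring
  simp only [Nat.cast_add, Nat.cast_one] at key ⊢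
  rw [Finset.sum_congr rfl (fun j hj => key j hj)]
  rw [← Finset.mul_sum, auxB0]
  ring

/-- Closed forms for the kernels of the root-binomial functions
`f_j(z) = √(C(N,j)/(j+1))·z^j`, in terms of `t = |z|²`. -/
theorem root_binomial_kernel_closed_forms (N : ℕ) (hN : 0 < N) (z : ℂ)
    (hz : z ≠ 0) (t : ℝ) (ht : t = ‖z‖ ^ 2) :
    (∑ j ∈ Finset.range (N + 1), (N.choose j : ℝ) * t ^ j / ((j : ℝ) + 1) =
      ((t + 1) ^ (N + 1) - 1) / (((N : ℝ) + 1) * t)) ∧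
    (∑ j ∈ Finset.range (N + 1),
        (N.choose j : ℂ) * (j : ℂ) * (t : ℂ) ^ j / (((j : ℂ) + 1) * z) =
      (((N : ℂ) * (t : ℂ) - 1) * ((t : ℂ) + 1) ^ N + 1) /
        (((N : ℂ) + 1) * z * (t : ℂ))) ∧
    (∑ j ∈ Finset.range (N + 1),
        (N.choose j : ℝ) * (j : ℝ) ^ 2 * t ^ (j - 1) / ((j : ℝ) + 1) =
      ((t + 1) ^ N * (t * ((N : ℝ) ^ 2 * t - (N : ℝ) + 1) + 1) - t - 1) /
        (((N : ℝ) + 1) * t ^ 2 * (t + 1))) := by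
  have ht0 : (0:ℝ) < t := ht ▸ pow_pos (norm_pos_iff.mpr hz) 2
  have htne : t ≠ 0 := ht0.ne'
  have ht1 : t + 1 ≠ 0 := by positivity
  have hNne : ((N:ℝ)+1) ≠ 0 := Nat.cast_add_one_ne_zero N
  refine ⟨auxS0 N t htne, ?_, ?_⟩
  · -- complex part
    have htc : (t:ℂ) ≠ 0 := Complex.ofReal_ne_zero.mpr htne
    have hNc : ((N:ℂ)+1) ≠ 0 := Nat.cast_add_one_ne_zero N
    have key : ∀ j ∈ range (N+1),
        (N.choose j : ℂ) * (j : ℂ) * (t : ℂ) ^ j / (((j : ℂ) + 1) * z)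
        = ((N.choose j : ℂ) * (t:ℂ)^j - (N.choose j : ℂ) * (t:ℂ)^j / ((j:ℂ)+1)) / z := by
      intro j _
      have hj : ((j:ℂ)+1) ≠ 0 := Nat.cast_add_one_ne_zero j
      field_simp
      ring
    rw [Finset.sum_congr rfl key, ← Finset.sum_div, Finset.sum_sub_distrib,
      auxB0, auxS0 N (t:ℂ) htc]
    field_simp
    ring
  · -- third part
    obtain ⟨M, rfl⟩ := Nat.exists_eq_succ_of_ne_zero hN.ne'
    have key : ∀ j ∈ range (M+1+1),
        ((M+1).choose j : ℝ) * (j:ℝ)^2 * t^(j-1) / ((j:ℝ)+1)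
        = (((M+1).choose j : ℝ) * (j:ℝ) * t^j - ((M+1).choose j : ℝ) * t^j
            + ((M+1).choose j : ℝ) * t^j / ((j:ℝ)+1)) / t := by
      intro j _
      match j with
      | 0 => simp
      | (k+1) =>
        have hj : ((k:ℝ)+1+1) ≠ 0 := by positivity
        have hk : (k+1) - 1 = k := rfl
        rw [hk]
        push_cast
        field_simp
        ring
    rw [Finset.sum_congr rfl key, ← Finset.sum_div, Finset.sum_add_distrib,
      Finset.sum_sub_distrib]
    have hb1 := auxB1 M t
    have hb0 := auxB0 (M+1) t
    have hs0 := auxS0 (M+1) t htne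
    push_cast at hb1 hb0 hs0 ⊢
    rw [hb1, hb0, hs0]
    have hM : ((M:ℝ)+1+1) ≠ 0 := by positivity
    field_simp
    ring
end

section
/- Let N ∈ ℕ, let p_0,…,p_{N+1} : ℂ → ℂ be polynomial functions with real coefficients, and let c ∈ ℝ be such that the Christoffel–Darboux formula holds: for all z, w ∈ ℂ with z ≠ w, Σ_{j=0}^N p_j(z)·p_j(w) = c·(p_{N+1}(z)·p_N(w) − p_N(z)·p_{N+1}(w))/(z − w). Then for every z ∈ ℂ with Im(z) ≠ 0, writing B_{1,N}(z) = Σ_{j=0}^N conj(p_j(z))·p_j′(z), one has Σ_{j=0}^N |p_j′(z)|² = c·Im(p_{N+1}′(z)·conj(p_N′(z)))/Im(z) − conj(B_{1,N}(z))/(2i·Im(z)) + B_{1,N}(z)/(2i·Im(z)). -/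
open Finset Polynomial

/-- For orthonormal polynomials on the real line satisfying the
Christoffel–Darboux formula,
`B₂,N(z) = c·Im(p_{N+1}′(z)·conj(p_N′(z)))/Im(z) − conj(B₁,N(z))/(2i·Im z) + B₁,N(z)/(2i·Im z)`. -/
theorem CD_real_line_B2 (N : ℕ) (p : ℕ → ℂ → ℂ) (c : ℝ)
    (hreal : ∀ j ≤ N + 1, ∃ q : Polynomial ℝ, ∀ z : ℂ, p j z = Polynomial.aeval z q)
    (hCD : ∀ z w : ℂ, z ≠ w →
      ∑ j ∈ Finset.range (N + 1), p j z * p j w =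
        (c : ℂ) * (p (N + 1) z * p N w - p N z * p (N + 1) w) / (z - w))
    (z : ℂ) (hz : z.im ≠ 0) :
    ((∑ j ∈ Finset.range (N + 1), ‖deriv (p j) z‖ ^ 2 : ℝ) : ℂ) =
      ((c * (deriv (p (N + 1)) z * (starRingEnd ℂ) (deriv (p N) z)).im / z.im : ℝ) : ℂ) -
        (starRingEnd ℂ)
            (∑ j ∈ Finset.range (N + 1), (starRingEnd ℂ) (p j z) * deriv (p j) z) /
          (2 * Complex.I * (z.im : ℂ)) +
        (∑ j ∈ Finset.range (N + 1), (starRingEnd ℂ) (p j z) * deriv (p j) z) /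
          (2 * Complex.I * (z.im : ℂ)) := by
  classical
  choose! q hq using hreal
  set P : ℕ → Polynomial ℂ := fun j => (q j).map (algebraMap ℝ ℂ) with hPdef
  have hp : ∀ j, j ≤ N + 1 → ∀ x : ℂ, p j x = (P j).eval x := by
    intro j hj x
    rw [hq j hj x, hPdef]
    simp [Polynomial.eval_map, Polynomial.aeval_def]
  -- conjugation facts
  have hconj : ∀ (r : Polynomial ℝ) (x : ℂ),
      (r.map (algebraMap ℝ ℂ)).eval ((starRingEnd ℂ) x) =
        (starRingEnd ℂ) ((r.map (algebraMap ℝ ℂ)).eval x) := by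
    intro r x
    rw [Polynomial.eval_map, Polynomial.eval_map, ← Polynomial.aeval_def, ← Polynomial.aeval_def]
    have := Polynomial.aeval_algHom_apply (Complex.conjAe.toAlgHom) x r
    simpa using this
  have hconjP : ∀ j, (P j).eval ((starRingEnd ℂ) z) = (starRingEnd ℂ) ((P j).eval z) := by
    intro j; exact hconj (q j) z
  have hconjD : ∀ j, ((P j).derivative).eval ((starRingEnd ℂ) z) =
      (starRingEnd ℂ) (((P j).derivative).eval z) := by
    intro j
    have : (P j).derivative = ((q j).derivative).map (algebraMap ℝ ℂ) := by
      rw [hPdef]; simp [Polynomial.derivative_map]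
    rw [this]; exact hconj (q j).derivative z
  -- Step 1: polynomial identity in w, for each fixed x
  have key1 : ∀ x : ℂ,
      (C x - X) * (∑ j ∈ range (N + 1), C ((P j).eval x) * P j) =
        C (c : ℂ) * (C ((P (N + 1)).eval x) * P N - C ((P N).eval x) * P (N + 1)) := by
    intro x
    apply Polynomial.eq_of_infinite_eval_eq
    apply Set.Infinite.mono (s := {x}ᶜ) ?_ ((Set.finite_singleton x).infinite_compl)
    intro w hw
    have hxw : x ≠ w := fun h => hw (by simp [h.symm])
    have hCD' := hCD x w hxw
    have hsub : x - w ≠ 0 := sub_ne_zero.mpr hxw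
    simp only [Set.mem_setOf_eq, Polynomial.eval_mul, Polynomial.eval_sub, Polynomial.eval_C,
      Polynomial.eval_X, Polynomial.eval_finset_sum]
    have hrw : ∀ j ∈ range (N + 1), (P j).eval x * (P j).eval w = p j x * p j w := by
      intro j hj
      have hjle : j ≤ N + 1 := Nat.le_of_lt (Finset.mem_range.mp hj)
      rw [hp j hjle x, hp j hjle w]
    rw [Finset.sum_congr rfl hrw, hCD', hp (N+1) le_rfl, hp N (Nat.le_succ N),
      hp (N+1) le_rfl, hp N (Nat.le_succ N)]
    field_simp
  -- differentiate key1 in w, then evaluate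
  have key2 : ∀ x w : ℂ,
      -(∑ j ∈ range (N + 1), (P j).eval x * (P j).eval w) +
        (x - w) * (∑ j ∈ range (N + 1), (P j).eval x * ((P j).derivative).eval w) =
      (c : ℂ) * ((P (N + 1)).eval x * ((P N).derivative).eval w -
        (P N).eval x * ((P (N + 1)).derivative).eval w) := by
    intro x w
    have h := congrArg (fun r => Polynomial.eval w (Polynomial.derivative r)) (key1 x)
    simp only [Polynomial.derivative_mul, Polynomial.derivative_sub, Polynomial.derivative_C,
      Polynomial.derivative_X, map_sum, Polynomial.eval_neg, Polynomial.eval_mul,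
      Polynomial.eval_add, Polynomial.eval_sub, Polynomial.eval_C, Polynomial.eval_X,
      Polynomial.eval_finset_sum, Polynomial.eval_one, Polynomial.eval_zero, zero_mul, zero_add,
      zero_sub, neg_mul, one_mul, mul_zero, sub_zero] at h
    linear_combination h
  -- Step 2: polynomial identity in x, for each fixed w
  have key3 : ∀ w : ℂ,
      -(∑ j ∈ range (N + 1), C ((P j).eval w) * P j) +
        (X - C w) * (∑ j ∈ range (N + 1), C (((P j).derivative).eval w) * P j) =
      C (c : ℂ) * (C (((P N).derivative).eval w) * P (N + 1) -
        C (((P (N + 1)).derivative).eval w) * P N) := by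
    intro w
    apply Polynomial.funext
    intro x
    simp only [Polynomial.eval_mul, Polynomial.eval_add, Polynomial.eval_sub, Polynomial.eval_neg,
      Polynomial.eval_C, Polynomial.eval_X, Polynomial.eval_finset_sum]
    have h := key2 x w
    have e1 : ∑ j ∈ range (N + 1), (P j).eval w * (P j).eval x
        = ∑ j ∈ range (N + 1), (P j).eval x * (P j).eval w := by
      exact Finset.sum_congr rfl fun j _ => mul_comm _ _
    have e2 : ∑ j ∈ range (N + 1), ((P j).derivative).eval w * (P j).eval x
        = ∑ j ∈ range (N + 1), (P j).eval x * ((P j).derivative).eval w := by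
      exact Finset.sum_congr rfl fun j _ => mul_comm _ _
    rw [e1, e2]
    linear_combination h
  -- differentiate key3 in x, evaluate at z, w := conj z
  set w : ℂ := (starRingEnd ℂ) z with hw
  have key4 :
      -(∑ j ∈ range (N + 1), (P j).eval w * ((P j).derivative).eval z) +
        ((∑ j ∈ range (N + 1), ((P j).derivative).eval w * (P j).eval z) +
          (z - w) * (∑ j ∈ range (N + 1), ((P j).derivative).eval w * ((P j).derivative).eval z)) =
      (c : ℂ) * (((P N).derivative).eval w * ((P (N + 1)).derivative).eval z -
        ((P (N + 1)).derivative).eval w * ((P N).derivative).eval z) := by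
    have h := congrArg (fun r => Polynomial.eval z (Polynomial.derivative r)) (key3 w)
    simp only [Polynomial.derivative_mul, Polynomial.derivative_sub, Polynomial.derivative_add,
      Polynomial.derivative_neg, Polynomial.derivative_C, Polynomial.derivative_X, map_sum,
      Polynomial.eval_mul, Polynomial.eval_add, Polynomial.eval_sub, Polynomial.eval_neg,
      Polynomial.eval_C, Polynomial.eval_X, Polynomial.eval_finset_sum, zero_mul, zero_add,
      zero_sub, one_mul, mul_zero, sub_zero, Polynomial.eval_one, Polynomial.eval_zero] at h
    linear_combination h
  -- rewrite derivatives of p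
  have hderiv : ∀ j, j ≤ N + 1 → deriv (p j) z = ((P j).derivative).eval z := by
    intro j hj
    have : p j = fun x => (P j).eval x := funext (hp j hj)
    rw [this, Polynomial.deriv]
  -- abbreviations
  set d : ℕ → ℂ := fun j => ((P j).derivative).eval z with hd
  set e : ℕ → ℂ := fun j => (P j).eval z with he
  -- rewrite key4 using conjugation
  have key5 :
      -(∑ j ∈ range (N + 1), (starRingEnd ℂ) (e j) * d j) +
        ((∑ j ∈ range (N + 1), (starRingEnd ℂ) (d j) * e j) +
          (z - w) * (∑ j ∈ range (N + 1), (starRingEnd ℂ) (d j) * d j)) =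
      (c : ℂ) * ((starRingEnd ℂ) (d N) * d (N + 1) -
        (starRingEnd ℂ) (d (N + 1)) * d N) := by
    have h := key4
    simp only [hconjP, hconjD] at h
    exact h
  -- rewrite the goal
  have hgoal1 : ∀ j ∈ range (N + 1),
      (starRingEnd ℂ) (p j z) * deriv (p j) z = (starRingEnd ℂ) (e j) * d j := by
    intro j hj
    rw [hp j (Nat.le_of_lt (Finset.mem_range.mp hj)) z, hderiv j (Nat.le_of_lt (Finset.mem_range.mp hj))]
  rw [Finset.sum_congr rfl hgoal1, hderiv (N+1) le_rfl, hderiv N (Nat.le_succ N)]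
  have habs : ∀ j ∈ range (N + 1),
      (‖deriv (p j) z‖ ^ 2 : ℝ) = Complex.normSq (d j) := by
    intro j hj
    rw [hderiv j (Nat.le_of_lt (Finset.mem_range.mp hj)), Complex.sq_norm]
  rw [Finset.sum_congr rfl habs]
  -- final algebra
  have hzz : z - w = 2 * Complex.I * (z.im : ℂ) := by
    rw [hw, Complex.sub_conj]; push_cast; ring
  set a : ℂ := d (N + 1) * (starRingEnd ℂ) (d N) with ha
  have haim : ((a.im : ℝ) : ℂ) = (a - (starRingEnd ℂ) a) / (2 * Complex.I) := by
    rw [Complex.sub_conj]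
    have : Complex.I ≠ 0 := Complex.I_ne_zero
    field_simp
    push_cast; ring
  have hBconj : (starRingEnd ℂ) (∑ j ∈ range (N + 1), (starRingEnd ℂ) (e j) * d j)
      = ∑ j ∈ range (N + 1), e j * (starRingEnd ℂ) (d j) := by
    simp [map_sum]
  have hnormSq : ((∑ j ∈ range (N + 1), Complex.normSq (d j) : ℝ) : ℂ)
      = ∑ j ∈ range (N + 1), (starRingEnd ℂ) (d j) * d j := by
    push_cast
    refine Finset.sum_congr rfl fun j _ => ?_
    rw [mul_comm, Complex.mul_conj]
  rw [hnormSq, hBconj]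
  have h2I : (2 : ℂ) * Complex.I * (z.im : ℂ) ≠ 0 := by
    simp [Complex.I_ne_zero, Complex.ofReal_ne_zero, hz]
  have hzim : ((z.im : ℝ) : ℂ) ≠ 0 := by simpa using hz
  have hcomm : ∑ j ∈ range (N + 1), e j * (starRingEnd ℂ) (d j)
      = ∑ j ∈ range (N + 1), (starRingEnd ℂ) (d j) * e j :=
    Finset.sum_congr rfl fun j _ => mul_comm _ _
  push_cast [haim]
  rw [hcomm]
  have hr : (↑c : ℂ) * ((a - (starRingEnd ℂ) a) / (2 * Complex.I)) / (z.im : ℂ)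
      - (∑ j ∈ range (N + 1), (starRingEnd ℂ) (d j) * e j) / (2 * Complex.I * (z.im : ℂ))
      + (∑ j ∈ range (N + 1), (starRingEnd ℂ) (e j) * d j) / (2 * Complex.I * (z.im : ℂ))
      = ((c : ℂ) * (a - (starRingEnd ℂ) a)
          + (∑ j ∈ range (N + 1), (starRingEnd ℂ) (e j) * d j)
          - (∑ j ∈ range (N + 1), (starRingEnd ℂ) (d j) * e j))
        / (2 * Complex.I * (z.im : ℂ)) := by
    field_simp
    ring
  rw [hr, eq_div_iff h2I, ha]
  simp only [map_mul, Complex.conj_conj]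
  linear_combination key5 - (∑ j ∈ range (N + 1), (starRingEnd ℂ) (d j) * d j) * hzz
end

section
/- Let N be a positive integer, let p_0,…,p_{N+1} : ℂ → ℂ be polynomial functions with real coefficients, and let c ∈ ℝ, c ≠ 0, be such that the Christoffel–Darboux formula holds: for all z, w ∈ ℂ with z ≠ w, Σ_{j=0}^N p_j(z)·p_j(w) = c·(p_{N+1}(z)·p_N(w) − p_N(z)·p_{N+1}(w))/(z − w). Let z ∈ ℂ with Im(z) ≠ 0 and Σ_{j=0}^N |p_j(z)|² > 0, and write I = Im(p_{N+1}(z)·conj(p_N(z))), J = Im(p_{N+1}′(z)·conj(p_N′(z))), D = conj(p_N(z))·p_{N+1}′(z) − conj(p_{N+1}(z))·p_N′(z). Then for K = (K₁,K₂) ∈ ℝ², the density function built from f_j = p_j satisfies h_{N,K}(z) = (1/π)·exp(−(K₁²+K₂²)·Im(z)/(2c·I)) · [ J/I − |D|²/(4I²) + 1/(4·Im(z)²) + ((K₁²+K₂²)/c)·( |D|²·Im(z)/(8I³) − Re(D)/(4I²) + 1/(8·Im(z)·I) ) ]. -/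
set_option maxRecDepth 8000
set_option maxHeartbeats 1000000

open Polynomial in
private lemma mapeval_eq (q : Polynomial ℝ) (ζ : ℂ) :
    Polynomial.aeval ζ q = (q.map (algebraMap ℝ ℂ)).eval ζ := by
  rw [Polynomial.aeval_def, Polynomial.eval₂_eq_eval_map]

open Polynomial in
private lemma mapeval_conj (q : Polynomial ℝ) (ζ : ℂ) :
    (q.map (algebraMap ℝ ℂ)).eval ((starRingEnd ℂ) ζ)
      = (starRingEnd ℂ) ((q.map (algebraMap ℝ ℂ)).eval ζ) := by
  rw [← mapeval_eq, ← mapeval_eq, Polynomial.aeval_conj]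


open Finset

/-- Theorem: density of complex zeros of random sums of polynomials
orthonormal on the real line, at an arbitrary level `K = (K₁, K₂)`. -/
theorem density_orthogonal_real_line (N : ℕ) (hN : 0 < N)
    (p : ℕ → ℂ → ℂ) (c : ℝ) (hc : c ≠ 0)
    (hreal : ∀ j ≤ N + 1, ∃ q : Polynomial ℝ, ∀ z : ℂ, p j z = Polynomial.aeval z q)
    (hCD : ∀ z w : ℂ, z ≠ w →
      ∑ j ∈ Finset.range (N + 1), p j z * p j w =
        (c : ℂ) * (p (N + 1) z * p N w - p N z * p (N + 1) w) / (z - w))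
    (z : ℂ) (hz : z.im ≠ 0)
    (hB0 : 0 < B0 p N z)
    (I J : ℝ) (D : ℂ)
    (hI : I = (p (N + 1) z * (starRingEnd ℂ) (p N z)).im)
    (hJ : J = (deriv (p (N + 1)) z * (starRingEnd ℂ) (deriv (p N) z)).im)
    (hD : D = (starRingEnd ℂ) (p N z) * deriv (p (N + 1)) z -
      (starRingEnd ℂ) (p (N + 1) z) * deriv (p N) z)
    (K₁ K₂ : ℝ) :
    hDen p N K₁ K₂ z =
      1 / Real.pi * Real.exp (-(K₁ ^ 2 + K₂ ^ 2) * z.im / (2 * c * I)) *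
        (J / I - ‖D‖ ^ 2 / (4 * I ^ 2) + 1 / (4 * z.im ^ 2) +
          (K₁ ^ 2 + K₂ ^ 2) / c *
            (‖D‖ ^ 2 * z.im / (8 * I ^ 3) - D.re / (4 * I ^ 2) +
              1 / (8 * z.im * I))) := by
  classical
  choose! q hq using hreal
  set P : ℕ → Polynomial ℂ := fun j => (q j).map (algebraMap ℝ ℂ) with hPdef
  have hP : ∀ j, j ≤ N + 1 → ∀ ζ : ℂ, p j ζ = (P j).eval ζ := by
    intro j hj ζ
    rw [hq j hj ζ]; exact mapeval_eq (q j) ζ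
  have hPconj : ∀ j (ζ : ℂ), (P j).eval ((starRingEnd ℂ) ζ) = (starRingEnd ℂ) ((P j).eval ζ) :=
    fun j ζ => mapeval_conj (q j) ζ
  have hPdconj : ∀ j (ζ : ℂ), ((P j).derivative).eval ((starRingEnd ℂ) ζ)
      = (starRingEnd ℂ) (((P j).derivative).eval ζ) := by
    intro j ζ
    have h1 : (P j).derivative = ((q j).derivative).map (algebraMap ℝ ℂ) :=
      Polynomial.derivative_map _ _
    rw [h1]; exact mapeval_conj _ ζ
  have hPd : ∀ j, j ≤ N + 1 → ∀ ζ : ℂ, deriv (p j) ζ = ((P j).derivative).eval ζ := by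
    intro j hj ζ
    have hfun : p j = fun ζ => (P j).eval ζ := funext (hP j hj)
    rw [hfun, Polynomial.deriv]
  -- step A
  have hA : ∀ ζ ω : ℂ, (∑ j ∈ Finset.range (N+1), (P j).eval ζ * (P j).eval ω) * (ζ - ω)
      = (c : ℂ) * ((P (N+1)).eval ζ * (P N).eval ω - (P N).eval ζ * (P (N+1)).eval ω) := by
    intro ζ ω
    by_cases h : ζ = ω
    · subst h; ring
    · have hcd := hCD ζ ω h
      have hsub : ζ - ω ≠ 0 := sub_ne_zero.mpr h
      have hsum : ∑ j ∈ Finset.range (N+1), p j ζ * p j ω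
          = ∑ j ∈ Finset.range (N+1), (P j).eval ζ * (P j).eval ω := by
        refine Finset.sum_congr rfl fun j hj => ?_
        have hj' : j ≤ N + 1 := by
          have := Finset.mem_range.mp hj; omega
        rw [hP j hj' ζ, hP j hj' ω]
      rw [hsum, hP (N+1) le_rfl ζ, hP (N+1) le_rfl ω, hP N (by omega) ζ, hP N (by omega) ω] at hcd
      rw [hcd]
      field_simp
  -- step B
  have hApoly : ∀ ω : ℂ,
      (∑ j ∈ Finset.range (N+1), P j * Polynomial.C ((P j).eval ω)
        * (Polynomial.X - Polynomial.C ω))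
      = Polynomial.C (c:ℂ) * (P (N+1) * Polynomial.C ((P N).eval ω)
          - P N * Polynomial.C ((P (N+1)).eval ω)) := by
    intro ω
    apply Polynomial.funext
    intro ζ
    have h := hA ζ ω
    simp only [Polynomial.eval_finset_sum, Polynomial.eval_mul, Polynomial.eval_sub,
      Polynomial.eval_C, Polynomial.eval_X]
    rw [← h, Finset.sum_mul]
  -- step C
  have hC : ∀ ζ ω : ℂ, ∑ j ∈ Finset.range (N+1),
      ((P j).derivative.eval ζ * (P j).eval ω * (ζ - ω) + (P j).eval ζ * (P j).eval ω)
      = (c:ℂ) * ((P (N+1)).derivative.eval ζ * (P N).eval ω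
          - (P N).derivative.eval ζ * (P (N+1)).eval ω) := by
    intro ζ ω
    have h := congrArg (fun Q => Polynomial.eval ζ (Polynomial.derivative Q)) (hApoly ω)
    simp only [Polynomial.derivative_sum, Polynomial.derivative_mul, Polynomial.derivative_C,
      Polynomial.derivative_X, Polynomial.derivative_sub, zero_mul, mul_zero, add_zero, zero_add,
      mul_one, sub_zero, zero_sub, Polynomial.eval_finset_sum, Polynomial.eval_add,
      Polynomial.eval_mul, Polynomial.eval_sub, Polynomial.eval_C, Polynomial.eval_X,
      Polynomial.eval_neg, mul_neg, neg_neg] at h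
    exact h
  -- step D
  have hCpoly : (∑ j ∈ Finset.range (N+1),
      (Polynomial.C ((P j).derivative.eval z) * P j * (Polynomial.C z - Polynomial.X)
        + Polynomial.C ((P j).eval z) * P j))
      = Polynomial.C (c:ℂ) * (Polynomial.C ((P (N+1)).derivative.eval z) * P N
          - Polynomial.C ((P N).derivative.eval z) * P (N+1)) := by
    apply Polynomial.funext
    intro ω
    have h := hC z ω
    simp only [Polynomial.eval_finset_sum, Polynomial.eval_add, Polynomial.eval_mul,
      Polynomial.eval_sub, Polynomial.eval_C, Polynomial.eval_X]
    rw [← h]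
  have hE2 := congrArg
    (fun Q => Polynomial.eval ((starRingEnd ℂ) z) (Polynomial.derivative Q)) hCpoly
  simp only [Polynomial.derivative_sum, Polynomial.derivative_add, Polynomial.derivative_mul,
    Polynomial.derivative_C, Polynomial.derivative_X, Polynomial.derivative_sub, zero_mul,
    mul_zero, add_zero, zero_add, mul_one, sub_zero, zero_sub, Polynomial.eval_finset_sum,
    Polynomial.eval_add, Polynomial.eval_mul, Polynomial.eval_sub, Polynomial.eval_C,
    Polynomial.eval_X, Polynomial.eval_neg, mul_neg] at hE2
  -- rewrite conj evals in the three equations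
  have E0 := hA z ((starRingEnd ℂ) z)
  have E1 := hC z ((starRingEnd ℂ) z)
  simp only [hPconj, hPdconj] at E0 E1 hE2
  -- abbreviations
  set A : ℕ → ℂ := fun j => (P j).eval z with hAdef
  set Bb : ℕ → ℂ := fun j => (P j).derivative.eval z with hBbdef
  have hAp : ∀ j, j ≤ N + 1 → p j z = A j := fun j hj => hP j hj z
  have hBp : ∀ j, j ≤ N + 1 → deriv (p j) z = Bb j := fun j hj => hPd j hj z
  -- kernels in terms of A, Bb
  have hB0P : ((B0 p N z : ℝ) : ℂ) = ∑ j ∈ Finset.range (N+1), A j * (starRingEnd ℂ) (A j) := by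
    rw [B0]
    push_cast
    refine Finset.sum_congr rfl fun j hj => ?_
    have hj' : j ≤ N + 1 := by have := Finset.mem_range.mp hj; omega
    rw [hAp j hj', ← Complex.ofReal_pow, Complex.sq_norm, Complex.mul_conj]
  have hB1P : B1 p N z = ∑ j ∈ Finset.range (N+1), (starRingEnd ℂ) (A j) * Bb j := by
    rw [B1]
    refine Finset.sum_congr rfl fun j hj => ?_
    have hj' : j ≤ N + 1 := by have := Finset.mem_range.mp hj; omega
    rw [hAp j hj', hBp j hj']
  have hB2P : ((B2 p N z : ℝ) : ℂ) = ∑ j ∈ Finset.range (N+1), Bb j * (starRingEnd ℂ) (Bb j) := by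
    rw [B2]
    push_cast
    refine Finset.sum_congr rfl fun j hj => ?_
    have hj' : j ≤ N + 1 := by have := Finset.mem_range.mp hj; omega
    rw [hBp j hj', ← Complex.ofReal_pow, Complex.sq_norm, Complex.mul_conj]
  -- I, J, D in terms of A, Bb
  have hIeq : A (N+1) * (starRingEnd ℂ) (A N) - A N * (starRingEnd ℂ) (A (N+1))
      = ((2 * I : ℝ) : ℂ) * Complex.I := by
    have h0 : A (N+1) * (starRingEnd ℂ) (A N) = p (N+1) z * (starRingEnd ℂ) (p N z) := by
      rw [hAp (N+1) le_rfl, hAp N (by omega)]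
    have h1 : A N * (starRingEnd ℂ) (A (N+1))
        = (starRingEnd ℂ) (p (N+1) z * (starRingEnd ℂ) (p N z)) := by
      rw [hAp (N+1) le_rfl, hAp N (by omega)]; simp [mul_comm]
    rw [h0, h1, Complex.sub_conj, hI]
  have hJeq : Bb (N+1) * (starRingEnd ℂ) (Bb N) - Bb N * (starRingEnd ℂ) (Bb (N+1))
      = ((2 * J : ℝ) : ℂ) * Complex.I := by
    have h0 : Bb (N+1) * (starRingEnd ℂ) (Bb N)
        = deriv (p (N+1)) z * (starRingEnd ℂ) (deriv (p N) z) := by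
      rw [hBp (N+1) le_rfl, hBp N (by omega)]
    have h1 : Bb N * (starRingEnd ℂ) (Bb (N+1))
        = (starRingEnd ℂ) (deriv (p (N+1)) z * (starRingEnd ℂ) (deriv (p N) z)) := by
      rw [hBp (N+1) le_rfl, hBp N (by omega)]; simp [mul_comm]
    rw [h0, h1, Complex.sub_conj, hJ]
  have hDeq : D = (starRingEnd ℂ) (A N) * Bb (N+1) - (starRingEnd ℂ) (A (N+1)) * Bb N := by
    rw [hD, hAp (N+1) le_rfl, hAp N (by omega), hBp (N+1) le_rfl, hBp N (by omega)]
  -- the three complex scalar equations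
  set u : ℂ := z - (starRingEnd ℂ) z with hu
  have hueq : u = ((2 * z.im : ℝ) : ℂ) * Complex.I := Complex.sub_conj z
  have e0 : ((B0 p N z : ℝ) : ℂ) * u = (c:ℂ) * (((2 * I : ℝ) : ℂ) * Complex.I) := by
    rw [hB0P, ← hIeq]; exact E0
  have e1 : B1 p N z * u + ((B0 p N z : ℝ) : ℂ) = (c:ℂ) * D := by
    have hsplit : ∑ j ∈ Finset.range (N+1),
        (Bb j * (starRingEnd ℂ) (A j) * u + A j * (starRingEnd ℂ) (A j))
        = (∑ j ∈ Finset.range (N+1), (starRingEnd ℂ) (A j) * Bb j) * u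
          + ∑ j ∈ Finset.range (N+1), A j * (starRingEnd ℂ) (A j) := by
      rw [Finset.sum_add_distrib, Finset.sum_mul]
      refine congrArg₂ (· + ·) (Finset.sum_congr rfl fun j _ => by ring) rfl
    rw [hB1P, hB0P, ← hsplit, hDeq]
    rw [show (c:ℂ) * ((starRingEnd ℂ) (A N) * Bb (N+1) - (starRingEnd ℂ) (A (N+1)) * Bb N)
      = (c:ℂ) * (Bb (N+1) * (starRingEnd ℂ) (A N) - Bb N * (starRingEnd ℂ) (A (N+1))) by ring]
    exact E1
  have e2 : ((B2 p N z : ℝ) : ℂ) * u - B1 p N z + (starRingEnd ℂ) (B1 p N z)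
      = (c:ℂ) * (((2 * J : ℝ) : ℂ) * Complex.I) := by
    have hconjB1 : (starRingEnd ℂ) (B1 p N z)
        = ∑ j ∈ Finset.range (N+1), A j * (starRingEnd ℂ) (Bb j) := by
      rw [hB1P, map_sum]
      exact Finset.sum_congr rfl fun j _ => by
        rw [map_mul, Complex.conj_conj]
    have hsplit : ∑ j ∈ Finset.range (N+1),
        (Bb j * ((starRingEnd ℂ) (Bb j) * u - (starRingEnd ℂ) (A j))
          + A j * (starRingEnd ℂ) (Bb j))
        = (∑ j ∈ Finset.range (N+1), Bb j * (starRingEnd ℂ) (Bb j)) * u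
          - ∑ j ∈ Finset.range (N+1), (starRingEnd ℂ) (A j) * Bb j
          + ∑ j ∈ Finset.range (N+1), A j * (starRingEnd ℂ) (Bb j) := by
      rw [Finset.sum_mul, ← Finset.sum_sub_distrib, ← Finset.sum_add_distrib]
      exact Finset.sum_congr rfl fun j _ => by ring
    rw [hB2P, hconjB1, hB1P, ← hsplit, ← hJeq]
    have hgoal : ∑ j ∈ Finset.range (N+1),
        (Bb j * ((starRingEnd ℂ) (Bb j) * u - (starRingEnd ℂ) (A j))
          + A j * (starRingEnd ℂ) (Bb j))
        = ∑ j ∈ Finset.range (N+1),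
        (Bb j * (starRingEnd ℂ) (Bb j) * u + -(Bb j * (starRingEnd ℂ) (A j))
          + A j * (starRingEnd ℂ) (Bb j)) :=
      Finset.sum_congr rfl fun j _ => by ring
    rw [hgoal]
    exact hE2
  -- real extraction
  have hb0y : B0 p N z * z.im = c * I := by
    have h := e0
    rw [hueq] at h
    have h2 : ((B0 p N z * (2*z.im) : ℝ) : ℂ) * Complex.I
        = ((c * (2*I) : ℝ) : ℂ) * Complex.I := by
      push_cast
      push_cast at h
      linear_combination h
    have h3 := mul_right_cancel₀ Complex.I_ne_zero h2
    have h4 := Complex.ofReal_inj.mp h3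
    linarith
  have hIne : I ≠ 0 := by
    intro h0
    rw [h0, mul_zero] at hb0y
    exact (mul_ne_zero (ne_of_gt hB0) hz) hb0y
  set β := B1 p N z with hβdef
  rw [hueq] at e1 e2
  have hre1 := congrArg Complex.re e1
  have him1 := congrArg Complex.im e1
  have him2 := congrArg Complex.im e2
  simp only [Complex.add_re, Complex.add_im, Complex.sub_re, Complex.sub_im, Complex.mul_re,
    Complex.mul_im, Complex.ofReal_re, Complex.ofReal_im, Complex.I_re, Complex.I_im,
    Complex.conj_re, Complex.conj_im, mul_zero, zero_mul, mul_one, one_mul, sub_zero, zero_sub,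
    add_zero, zero_add, neg_neg, neg_zero] at hre1 him1 him2
  have hβim : β.im * (2*z.im) = B0 p N z - c * D.re := by linear_combination -hre1
  have hβre : β.re * (2*z.im) = c * D.im := by linear_combination him1
  have hb2y : B2 p N z * z.im = c*J + β.im := by
    first
    | linear_combination him2
    | linear_combination (1/2 : ℝ)*him2
    | linear_combination -him2
    | linear_combination (-1/2 : ℝ)*him2
  -- abs values
  have habsB1 : ‖β‖ ^ 2 = β.re^2 + β.im^2 := by
    rw [Complex.sq_norm, Complex.normSq_apply]; ring
  have habsD : ‖D‖ ^ 2 = D.re^2 + D.im^2 := by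
    rw [Complex.sq_norm, Complex.normSq_apply]; ring
  -- explicit values
  have hb0ne : B0 p N z ≠ 0 := ne_of_gt hB0
  have e_b0 : B0 p N z = c*I/z.im := by
    field_simp
    linear_combination hb0y
  have e_bim : β.im = (c*I/z.im - c*D.re)/(2*z.im) := by
    rw [← e_b0]; field_simp; linear_combination hβim
  have e_bre : β.re = c*D.im/(2*z.im) := by field_simp; linear_combination hβre
  have e_b2 : B2 p N z = (c*J + (c*I/z.im - c*D.re)/(2*z.im))/z.im := by
    rw [← e_bim]; field_simp
    linear_combination hb2y
  have hexp : -(K₁^2+K₂^2)*z.im/(2*c*I) = -(K₁^2+K₂^2)/(2*(B0 p N z)) := by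
    rw [e_b0]; field_simp
  rw [hDen, ← hβdef, habsB1, habsD, hexp, e_b2, e_bim, e_bre, e_b0]
  have hpi := Real.pi_ne_zero
  have hexpne := Real.exp_ne_zero (-(K₁^2+K₂^2)/(2*(c*I/z.im)))
  field_simp
  ring
end

section
/- Let N be a positive integer, let p_0,…,p_{N+1} : ℂ → ℂ be polynomial functions with real coefficients, and let c ∈ ℝ, c ≠ 0, be such that the Christoffel–Darboux formula holds: for all z, w ∈ ℂ with z ≠ w, Σ_{j=0}^N p_j(z)·p_j(w) = c·(p_{N+1}(z)·p_N(w) − p_N(z)·p_{N+1}(w))/(z − w). Let z ∈ ℂ with Im(z) ≠ 0 and Σ_{j=0}^N |p_j(z)|² > 0. Then for K = (0,0) the density function built from f_j = p_j satisfies h_{N,0}(z) = (1/π)·[ Im(p_{N+1}′(z)·conj(p_N′(z)))/Im(p_{N+1}(z)·conj(p_N(z))) − |conj(p_N(z))·p_{N+1}′(z) − conj(p_{N+1}(z))·p_N′(z)|²/(4·Im(p_{N+1}(z)·conj(p_N(z)))²) + 1/(4·Im(z)²) ]. -/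
open Finset

lemma aux_conj_aeval (q : Polynomial ℝ) (z : ℂ) :
    (starRingEnd ℂ) (Polynomial.aeval z q) = Polynomial.aeval ((starRingEnd ℂ) z) q := by
  rw [show (starRingEnd ℂ) = ⇑Complex.conjAe from rfl, ← Polynomial.aeval_algHom_apply]

lemma aux_hasDerivAt_aeval (q : Polynomial ℝ) (z : ℂ) :
    HasDerivAt (fun x : ℂ => Polynomial.aeval x q) (Polynomial.aeval z q.derivative) z := by
  have h := (q.map (algebraMap ℝ ℂ)).hasDerivAt z
  rw [Polynomial.derivative_map] at h
  simp only [Polynomial.aeval_def, ← Polynomial.eval_map]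
  exact h

lemma aux_abscast (t : ℂ) : ((‖t‖ : ℝ) : ℂ) ^ 2 = t * (starRingEnd ℂ) t := by
  rw [← Complex.ofReal_pow, Complex.sq_norm]
  exact_mod_cast (Complex.mul_conj t).symm

set_option maxHeartbeats 1000000 in
lemma aux_key (m u v e d cc pi : ℂ)
    (hpi : pi ≠ 0) (hd : d ≠ 0) (hcc : cc ≠ 0) (hE : e ≠ 0) :
    (cc * e / d *
          ((cc * (m * d + u * -1 - v) * d ^ 2 -
              cc * (u * d - e) * (2 * d ^ 1 * -1)) / (d ^ 2) ^ 2) -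
        cc * (u * d - e) / d ^ 2 *
          (cc * (-v * -d - -e) / (-d) ^ 2)) /
      (pi * (cc * e / d) ^ 2) =
    1 / pi * (m / e - u * -v / -e ^ 2 + 1 / -d ^ 2) := by
  field_simp
  ring


set_option maxHeartbeats 800000 in
/-- Theorem: density of complex zeros of random sums of polynomials
orthonormal on the real line, at the level `K = (0,0)`. -/
theorem density_orthogonal_real_line_level_zero (N : ℕ) (hN : 0 < N)
    (p : ℕ → ℂ → ℂ) (c : ℝ) (hc : c ≠ 0)
    (hreal : ∀ j ≤ N + 1, ∃ q : Polynomial ℝ, ∀ z : ℂ, p j z = Polynomial.aeval z q)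
    (hCD : ∀ z w : ℂ, z ≠ w →
      ∑ j ∈ Finset.range (N + 1), p j z * p j w =
        (c : ℂ) * (p (N + 1) z * p N w - p N z * p (N + 1) w) / (z - w))
    (z : ℂ) (hz : z.im ≠ 0)
    (hB0 : 0 < B0 p N z) :
    hDen p N 0 0 z =
      1 / Real.pi *
        ((deriv (p (N + 1)) z * (starRingEnd ℂ) (deriv (p N) z)).im /
            (p (N + 1) z * (starRingEnd ℂ) (p N z)).im -
          ‖(starRingEnd ℂ) (p N z) * deriv (p (N + 1)) z -
              (starRingEnd ℂ) (p (N + 1) z) * deriv (p N) z‖ ^ 2 /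
            (4 * (p (N + 1) z * (starRingEnd ℂ) (p N z)).im ^ 2) +
          1 / (4 * z.im ^ 2)) := by
  choose q hq using hreal
  have hfun : ∀ j (hj : j ≤ N + 1), p j = fun x : ℂ => Polynomial.aeval x (q j hj) :=
    fun j hj => funext (hq j hj)
  have hd : ∀ j, j ≤ N + 1 → ∀ x : ℂ, HasDerivAt (p j) (deriv (p j) x) x := by
    intro j hj x
    rw [hfun j hj]
    exact (aux_hasDerivAt_aeval (q j hj) x).differentiableAt.hasDerivAt
  have hconj : ∀ j, j ≤ N + 1 → ∀ x : ℂ,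
      (starRingEnd ℂ) (p j x) = p j ((starRingEnd ℂ) x) := by
    intro j hj x; rw [hfun j hj]; exact aux_conj_aeval _ _
  have hconjd : ∀ j, j ≤ N + 1 → ∀ x : ℂ,
      (starRingEnd ℂ) (deriv (p j) x) = deriv (p j) ((starRingEnd ℂ) x) := by
    intro j hj x
    rw [hfun j hj]
    have h1 : ∀ y : ℂ, deriv (fun x : ℂ => Polynomial.aeval x (q j hj)) y
        = Polynomial.aeval y (q j hj).derivative := fun y => (aux_hasDerivAt_aeval _ y).deriv
    rw [h1, h1]
    exact aux_conj_aeval _ _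
  set w₀ : ℂ := (starRingEnd ℂ) z with hw₀
  have hzw : z ≠ w₀ := by
    intro h
    exact hz ((Complex.conj_eq_iff_im).mp h.symm)
  have hdne : z - w₀ ≠ 0 := sub_ne_zero.mpr hzw
  -- step A
  have stepA : ∀ w : ℂ, w ≠ z →
      (∑ j ∈ Finset.range (N + 1), deriv (p j) z * p j w) =
        (c : ℂ) * ((deriv (p (N + 1)) z * p N w - deriv (p N) z * p (N + 1) w) * (z - w)
          - (p (N + 1) z * p N w - p N z * p (N + 1) w)) / (z - w) ^ 2 := by
    intro w hw
    have hL : HasDerivAt (fun t : ℂ => ∑ j ∈ Finset.range (N + 1), p j t * p j w)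
        (∑ j ∈ Finset.range (N + 1), deriv (p j) z * p j w) z :=
      HasDerivAt.fun_sum fun j hj =>
        (hd j (by have := Finset.mem_range.mp hj; omega) z).mul_const _
    have hnum : HasDerivAt
        (fun t : ℂ => (c : ℂ) * (p (N + 1) t * p N w - p N t * p (N + 1) w))
        ((c : ℂ) * (deriv (p (N + 1)) z * p N w - deriv (p N) z * p (N + 1) w)) z :=
      (((hd (N + 1) le_rfl z).mul_const _).sub ((hd N (by omega) z).mul_const _)).const_mul _
    have hden : HasDerivAt (fun t : ℂ => t - w) 1 z := (hasDerivAt_id z).sub_const w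
    have hR := hnum.div hden (sub_ne_zero.mpr (Ne.symm hw))
    have hev : (fun t : ℂ => ∑ j ∈ Finset.range (N + 1), p j t * p j w)
        =ᶠ[nhds z] fun t : ℂ =>
          (c : ℂ) * (p (N + 1) t * p N w - p N t * p (N + 1) w) / (t - w) := by
      filter_upwards [isOpen_ne.mem_nhds (Ne.symm hw)] with t ht
      exact hCD t w ht
    have key := hL.unique (hR.congr_of_eventuallyEq hev)
    rw [key]; ring
  -- step B
  have hG : HasDerivAt (fun w : ℂ => ∑ j ∈ Finset.range (N + 1), deriv (p j) z * p j w)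
      (∑ j ∈ Finset.range (N + 1), deriv (p j) z * deriv (p j) w₀) w₀ :=
    HasDerivAt.fun_sum fun j hj =>
      ((hd j (by have := Finset.mem_range.mp hj; omega) w₀).const_mul _)
  have h2 : HasDerivAt (fun w : ℂ => z - w) (-1) w₀ := (hasDerivAt_id w₀).const_sub z
  have h1' : HasDerivAt
      (fun w : ℂ => deriv (p (N + 1)) z * p N w - deriv (p N) z * p (N + 1) w)
      (deriv (p (N + 1)) z * deriv (p N) w₀ - deriv (p N) z * deriv (p (N + 1)) w₀) w₀ :=
    ((hd N (by omega) w₀).const_mul _).sub ((hd (N + 1) le_rfl w₀).const_mul _)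
  have h3' : HasDerivAt (fun w : ℂ => p (N + 1) z * p N w - p N z * p (N + 1) w)
      (p (N + 1) z * deriv (p N) w₀ - p N z * deriv (p (N + 1)) w₀) w₀ :=
    ((hd N (by omega) w₀).const_mul _).sub ((hd (N + 1) le_rfl w₀).const_mul _)
  have hnumB : HasDerivAt
      (fun w : ℂ => (c : ℂ) *
        ((deriv (p (N + 1)) z * p N w - deriv (p N) z * p (N + 1) w) * (z - w)
          - (p (N + 1) z * p N w - p N z * p (N + 1) w)))
      ((c : ℂ) *
        (((deriv (p (N + 1)) z * deriv (p N) w₀ - deriv (p N) z * deriv (p (N + 1)) w₀)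
            * (z - w₀)
          + (deriv (p (N + 1)) z * p N w₀ - deriv (p N) z * p (N + 1) w₀) * (-1))
          - (p (N + 1) z * deriv (p N) w₀ - p N z * deriv (p (N + 1)) w₀))) w₀ :=
    ((h1'.mul h2).sub h3').const_mul _
  have hgB : HasDerivAt (fun w : ℂ => (z - w) ^ 2) (2 * (z - w₀) ^ 1 * -1) w₀ := h2.pow 2
  have hH := hnumB.div hgB (pow_ne_zero 2 hdne)
  have hevB : (fun w : ℂ => ∑ j ∈ Finset.range (N + 1), deriv (p j) z * p j w)
      =ᶠ[nhds w₀] fun w : ℂ =>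
        (c : ℂ) * ((deriv (p (N + 1)) z * p N w - deriv (p N) z * p (N + 1) w) * (z - w)
          - (p (N + 1) z * p N w - p N z * p (N + 1) w)) / (z - w) ^ 2 := by
    filter_upwards [isOpen_ne.mem_nhds hzw.symm] with w hw
    exact stepA w hw
  have stepB := hG.unique (hH.congr_of_eventuallyEq hevB)
  -- conjugation facts at z and w₀
  have hc1 : (starRingEnd ℂ) (p N z) = p N w₀ := hconj N (by omega) z
  have hc2 : (starRingEnd ℂ) (p (N + 1) z) = p (N + 1) w₀ := hconj (N + 1) le_rfl z
  have hc3 : (starRingEnd ℂ) (p N w₀) = p N z := by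
    rw [hconj N (by omega) w₀, hw₀, Complex.conj_conj]
  have hc4 : (starRingEnd ℂ) (p (N + 1) w₀) = p (N + 1) z := by
    rw [hconj (N + 1) le_rfl w₀, hw₀, Complex.conj_conj]
  have hcd1 : (starRingEnd ℂ) (deriv (p N) z) = deriv (p N) w₀ := hconjd N (by omega) z
  have hcd2 : (starRingEnd ℂ) (deriv (p (N + 1)) z) = deriv (p (N + 1)) w₀ :=
    hconjd (N + 1) le_rfl z
  have hcd3 : (starRingEnd ℂ) (deriv (p N) w₀) = deriv (p N) z := by
    rw [hconjd N (by omega) w₀, hw₀, Complex.conj_conj]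
  have hcd4 : (starRingEnd ℂ) (deriv (p (N + 1)) w₀) = deriv (p (N + 1)) z := by
    rw [hconjd (N + 1) le_rfl w₀, hw₀, Complex.conj_conj]
  -- cast identities
  have hB0c : ((B0 p N z : ℝ) : ℂ) =
      (c : ℂ) * (p (N + 1) z * p N w₀ - p N z * p (N + 1) w₀) / (z - w₀) := by
    rw [← hCD z w₀ hzw]
    rw [B0]
    push_cast
    refine Finset.sum_congr rfl fun j hj => ?_
    rw [aux_abscast, hconj j (by have := Finset.mem_range.mp hj; omega) z]
  have hB1c : B1 p N z =
      (c : ℂ) * ((deriv (p (N + 1)) z * p N w₀ - deriv (p N) z * p (N + 1) w₀) * (z - w₀)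
        - (p (N + 1) z * p N w₀ - p N z * p (N + 1) w₀)) / (z - w₀) ^ 2 := by
    rw [← stepA w₀ hzw.symm, B1]
    refine Finset.sum_congr rfl fun j hj => ?_
    rw [hconj j (by have := Finset.mem_range.mp hj; omega) z]; ring
  have hB2c : ((B2 p N z : ℝ) : ℂ) =
      ∑ j ∈ Finset.range (N + 1), deriv (p j) z * deriv (p j) w₀ := by
    rw [B2]
    push_cast
    refine Finset.sum_congr rfl fun j hj => ?_
    rw [aux_abscast, hconjd j (by have := Finset.mem_range.mp hj; omega) z]
  rw [stepB] at hB2c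

  -- nonvanishing facts
  have hπ : (Real.pi : ℂ) ≠ 0 := by exact_mod_cast Real.pi_ne_zero
  have hB0cne : ((B0 p N z : ℝ) : ℂ) ≠ 0 := by exact_mod_cast ne_of_gt hB0
  have hE : p (N + 1) z * p N w₀ - p N z * p (N + 1) w₀ ≠ 0 := by
    intro h
    apply hB0cne
    rw [hB0c, h, mul_zero, zero_div]
  have hE' : p (N + 1) z * p N w₀ - p (N + 1) w₀ * p N z ≠ 0 := by
    intro h; exact hE (by linear_combination h)
  have hcc : (c : ℂ) ≠ 0 := by exact_mod_cast hc
  have hcw : (starRingEnd ℂ) w₀ = z := by rw [hw₀, Complex.conj_conj]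
  -- imaginary-part relations
  have hβI : 2 * (((p (N + 1) z * p N w₀).im : ℝ) : ℂ) * Complex.I
      = p (N + 1) z * p N w₀ - p (N + 1) w₀ * p N z := by
    have h := Complex.sub_conj (p (N + 1) z * p N w₀)
    rw [map_mul, hc2, hc3] at h
    push_cast at h
    linear_combination -h
  have hμI : 2 * (((deriv (p (N + 1)) z * deriv (p N) w₀).im : ℝ) : ℂ) * Complex.I
      = deriv (p (N + 1)) z * deriv (p N) w₀ - deriv (p (N + 1)) w₀ * deriv (p N) z := by
    have h := Complex.sub_conj (deriv (p (N + 1)) z * deriv (p N) w₀)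
    rw [map_mul, hcd2, hcd3] at h
    push_cast at h
    linear_combination -h
  have hζI : 2 * ((z.im : ℝ) : ℂ) * Complex.I = z - w₀ := by
    have h := Complex.sub_conj z
    rw [← hw₀] at h
    push_cast at h
    linear_combination -h
  have hβ2 : (4 : ℂ) * (((p (N + 1) z * p N w₀).im : ℝ) : ℂ) ^ 2
      = -((p (N + 1) z * p N w₀ - p (N + 1) w₀ * p N z) ^ 2) := by
    rw [← hβI, mul_pow, mul_pow, Complex.I_sq]; ring
  have hζ2 : (4 : ℂ) * ((z.im : ℝ) : ℂ) ^ 2 = -((z - w₀) ^ 2) := by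
    rw [← hζI, mul_pow, mul_pow, Complex.I_sq]; ring
  have hβne : (((p (N + 1) z * p N w₀).im : ℝ) : ℂ) ≠ 0 := by
    intro h0
    apply hE'
    have h := hβI
    rw [h0, mul_zero, zero_mul] at h
    linear_combination -h
  have hμβ : (((deriv (p (N + 1)) z * deriv (p N) w₀).im : ℝ) : ℂ)
        / (((p (N + 1) z * p N w₀).im : ℝ) : ℂ)
      = (deriv (p (N + 1)) z * deriv (p N) w₀ - deriv (p (N + 1)) w₀ * deriv (p N) z)
        / (p (N + 1) z * p N w₀ - p (N + 1) w₀ * p N z) := by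
    rw [div_eq_div_iff hβne hE']
    linear_combination (((p (N + 1) z * p N w₀).im : ℝ) : ℂ) * hμI
      - (((deriv (p (N + 1)) z * deriv (p N) w₀).im : ℝ) : ℂ) * hβI
  -- simplify hDen at K = 0
  have hDen0 : hDen p N 0 0 z = (B0 p N z * B2 p N z - ‖B1 p N z‖ ^ 2)
      / (Real.pi * B0 p N z ^ 2) := by
    rw [hDen]
    have e0 : -((0 : ℝ) ^ 2 + 0 ^ 2) / (2 * B0 p N z) = 0 := by norm_num
    have e1 : ((0 : ℝ) ^ 2 + 0 ^ 2) / (2 * B0 p N z) = 0 := by norm_num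
    rw [e0, e1, Real.exp_zero]
    have hBne : B0 p N z ≠ 0 := ne_of_gt hB0
    field_simp
    ring
  rw [hDen0, hc1, hc2, hcd1]
  rw [← Complex.ofReal_inj]
  push_cast
  rw [aux_abscast (B1 p N z),
    aux_abscast (p N w₀ * deriv (p (N + 1)) z - p (N + 1) w₀ * deriv (p N) z),
    hB0c, hB2c, hB1c, hμβ, hβ2, hζ2]
  simp only [map_div₀, map_mul, map_sub, map_pow, map_ofNat, Complex.conj_ofReal,
    hc1, hc2, hc3, hc4, hcd1, hcd2, hcd3, hcd4, hcw, ← hw₀]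
  rw [show deriv (p (N + 1)) w₀ * p N z - deriv (p N) w₀ * p (N + 1) z
      = -(p (N + 1) z * deriv (p N) w₀ - p N z * deriv (p (N + 1)) w₀) from by ring]
  rw [show p (N + 1) w₀ * p N z - p N w₀ * p (N + 1) z
      = -(p (N + 1) z * p N w₀ - p N z * p (N + 1) w₀) from by ring]
  rw [show w₀ - z = -(z - w₀) from by ring]
  rw [show deriv (p (N + 1)) z * deriv (p N) w₀ - deriv (p (N + 1)) w₀ * deriv (p N) z
      = deriv (p (N + 1)) z * deriv (p N) w₀ - deriv (p N) z * deriv (p (N + 1)) w₀ from by ring]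
  rw [show p (N + 1) z * p N w₀ - p (N + 1) w₀ * p N z
      = p (N + 1) z * p N w₀ - p N z * p (N + 1) w₀ from by ring]
  rw [show p N w₀ * deriv (p (N + 1)) z - p (N + 1) w₀ * deriv (p N) z
      = deriv (p (N + 1)) z * p N w₀ - deriv (p N) z * p (N + 1) w₀ from by ring]
  rw [show p N z * deriv (p (N + 1)) w₀ - p (N + 1) z * deriv (p N) w₀
      = -(p (N + 1) z * deriv (p N) w₀ - p N z * deriv (p (N + 1)) w₀) from by ring]
  exact aux_key _ _ _ _ _ _ _ hπ hdne hcc hE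
end

section
/- Let N ∈ ℕ and let φ_0,…,φ_{N+1} : ℂ → ℂ be polynomial functions, with φ*_{N+1} the reciprocal polynomial of φ_{N+1} of degree bound N+1 (the coefficient of z^j in φ*_{N+1} is the complex conjugate of the coefficient of z^{N+1−j} in φ_{N+1}), such that the Christoffel–Darboux formula on the unit circle holds: for all z, w ∈ ℂ with conj(w)·z ≠ 1, Σ_{j=0}^N φ_j(z)·conj(φ_j(w)) = (conj(φ*_{N+1}(w))·φ*_{N+1}(z) − conj(φ_{N+1}(w))·φ_{N+1}(z))/(1 − conj(w)·z). Then for every z ∈ ℂ with |z| ≠ 1, writing B_{0,N}(z) = Σ_{j=0}^N |φ_j(z)|² and B_{1,N}(z) = Σ_{j=0}^N conj(φ_j(z))·φ_j′(z), one has Σ_{j=0}^N |φ_j′(z)|² = (|φ*_{N+1}′(z)|² − |φ_{N+1}′(z)|²)/(1 − |z|²) + 2·Re(z·B_{1,N}(z))/(1 − |z|²) + B_{0,N}(z)/(1 − |z|²). -/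
open Finset

private lemma conj_eval' (p : Polynomial ℂ) (w : ℂ) :
    (p.map (starRingEnd ℂ)).eval ((starRingEnd ℂ) w) = (starRingEnd ℂ) (p.eval w) := by
  rw [Polynomial.eval_map, Polynomial.eval₂_at_apply]


private lemma final_algebra (n : ℕ) (b a : ℕ → ℂ) (s q w : ℂ) (hw : ‖w‖ ≠ 1)
    (E : -1 * ∑ j ∈ Finset.range n, b j * (starRingEnd ℂ) (b j)
      + -(starRingEnd ℂ) w * ∑ j ∈ Finset.range n, b j * (starRingEnd ℂ) (a j)
      + (-w * ∑ j ∈ Finset.range n, a j * (starRingEnd ℂ) (b j)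
        + (1 - (starRingEnd ℂ) w * w) * ∑ j ∈ Finset.range n, a j * (starRingEnd ℂ) (a j))
      = (starRingEnd ℂ) s * s - (starRingEnd ℂ) q * q) :
    ∑ j ∈ Finset.range n, ‖a j‖ ^ 2 =
      (‖s‖ ^ 2 - ‖q‖ ^ 2) / (1 - ‖w‖ ^ 2) +
      2 * (w * ∑ j ∈ Finset.range n, (starRingEnd ℂ) (b j) * a j).re / (1 - ‖w‖ ^ 2) +
      (∑ j ∈ Finset.range n, ‖b j‖ ^ 2) / (1 - ‖w‖ ^ 2) := by
  have hr : (1:ℝ) - ‖w‖ ^ 2 ≠ 0 := by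
    intro h
    have h1 : (‖w‖ - 1) * (‖w‖ + 1) = 0 := by nlinarith
    rcases mul_eq_zero.mp h1 with h2 | h2
    · exact hw (by linarith)
    · have := norm_nonneg w; linarith
  rw [← add_div, ← add_div, eq_div_iff hr]
  set B := ∑ j ∈ Finset.range n, (starRingEnd ℂ) (b j) * a j with hBdef
  have h1 : ∑ j ∈ Finset.range n, b j * (starRingEnd ℂ) (b j)
      = ((∑ j ∈ Finset.range n, ‖b j‖ ^ 2 : ℝ) : ℂ) := by
    push_cast
    exact Finset.sum_congr rfl fun j _ => by rw [Complex.mul_conj, ← Complex.sq_norm]; norm_cast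
  have h2 : ∑ j ∈ Finset.range n, a j * (starRingEnd ℂ) (a j)
      = ((∑ j ∈ Finset.range n, ‖a j‖ ^ 2 : ℝ) : ℂ) := by
    push_cast
    exact Finset.sum_congr rfl fun j _ => by rw [Complex.mul_conj, ← Complex.sq_norm]; norm_cast
  have h3 : (starRingEnd ℂ) s * s = ((‖s‖ ^ 2 : ℝ) : ℂ) := by
    rw [mul_comm, Complex.mul_conj, Complex.sq_norm]
  have h4 : (starRingEnd ℂ) q * q = ((‖q‖ ^ 2 : ℝ) : ℂ) := by
    rw [mul_comm, Complex.mul_conj, Complex.sq_norm]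
  have h5 : (starRingEnd ℂ) w * w = ((‖w‖ ^ 2 : ℝ) : ℂ) := by
    rw [mul_comm, Complex.mul_conj, Complex.sq_norm]
  have h6 : ∑ j ∈ Finset.range n, b j * (starRingEnd ℂ) (a j) = (starRingEnd ℂ) B := by
    rw [hBdef, map_sum]
    exact Finset.sum_congr rfl fun j _ => by rw [map_mul, Complex.conj_conj, mul_comm]
  have h7 : ∑ j ∈ Finset.range n, a j * (starRingEnd ℂ) (b j) = B := by
    rw [hBdef]
    exact Finset.sum_congr rfl fun j _ => mul_comm _ _
  rw [h1, h2, h3, h4, h5, h6, h7] at E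
  have h8 : (starRingEnd ℂ) w * (starRingEnd ℂ) B = (starRingEnd ℂ) (w * B) := (map_mul _ _ _).symm
  have h9 := Complex.add_conj (w * B)
  refine Complex.ofReal_inj.mp ?_
  push_cast at E h9 ⊢
  linear_combination E + h8 + h9

/-- Christoffel–Darboux on the unit circle:
`B₂,N(z) = (|φ*′|² − |φ′|²)/(1−|z|²) + 2Re(z·B₁,N(z))/(1−|z|²) + B₀,N(z)/(1−|z|²)`. -/
theorem CD_unit_circle_B2
    (N : ℕ) (φ : ℕ → ℂ → ℂ) (φs : ℂ → ℂ) (Q : Polynomial ℂ)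
    (hpoly : ∀ j ≤ N + 1, ∃ q : Polynomial ℂ, ∀ z : ℂ, φ j z = Polynomial.eval z q)
    (hQ : ∀ z : ℂ, φ (N + 1) z = Polynomial.eval z Q)
    (hφs : ∀ z : ℂ, φs z =
      Polynomial.eval z (Polynomial.reflect (N + 1) (Q.map (starRingEnd ℂ))))
    (hCD : ∀ z w : ℂ, (starRingEnd ℂ) w * z ≠ 1 →
      ∑ j ∈ Finset.range (N + 1), φ j z * (starRingEnd ℂ) (φ j w) =
        ((starRingEnd ℂ) (φs w) * φs z -
          (starRingEnd ℂ) (φ (N + 1) w) * φ (N + 1) z) /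
          (1 - (starRingEnd ℂ) w * z))
    (z : ℂ) (hz : ‖z‖ ≠ 1)
    :
    ∑ j ∈ Finset.range (N + 1), ‖deriv (φ j) z‖ ^ 2 =
      (‖deriv φs z‖ ^ 2 - ‖deriv (φ (N + 1)) z‖ ^ 2) /
        (1 - ‖z‖ ^ 2) +
      2 * (z * ∑ j ∈ Finset.range (N + 1),
            (starRingEnd ℂ) (φ j z) * deriv (φ j) z).re /
        (1 - ‖z‖ ^ 2) +
      (∑ j ∈ Finset.range (N + 1), ‖φ j z‖ ^ 2) /
        (1 - ‖z‖ ^ 2) := by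
  classical
  set c := starRingEnd ℂ with hcdef
  -- choose representing polynomials
  have hex : ∀ j : ℕ, ∃ q : Polynomial ℂ, j ≤ N + 1 → ∀ y : ℂ, φ j y = q.eval y := by
    intro j
    by_cases h : j ≤ N + 1
    · obtain ⟨q, hq⟩ := hpoly j h
      exact ⟨q, fun _ y => hq y⟩
    · exact ⟨0, fun h' => absurd h' h⟩
  choose P hP using hex
  set S : Polynomial ℂ := Polynomial.reflect (N + 1) (Q.map c) with hSdef
  have hcc : ∀ w : ℂ, c (c w) = w := fun w => Complex.conj_conj w
  -- Step A : identity on the set v*u ≠ 1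
  have hA : ∀ u v : ℂ, v * u ≠ 1 →
      (1 - v * u) * ∑ j ∈ range (N + 1), (P j).eval u * ((P j).map c).eval v =
      ((S.map c).eval v) * S.eval u - ((Q.map c).eval v) * Q.eval u := by
    intro u v huv
    have h0 := hCD u (c v) (by rw [hcc]; exact huv)
    have hsum : ∑ j ∈ range (N + 1), φ j u * c (φ j (c v)) =
        ∑ j ∈ range (N + 1), (P j).eval u * ((P j).map c).eval v := by
      refine Finset.sum_congr rfl fun j hj => ?_
      have hj' : j ≤ N + 1 := (mem_range.mp hj).le
      rw [hP j hj' u, hP j hj' (c v), ← conj_eval' (P j) (c v), hcc]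
    have hφs1 : c (φs (c v)) = (S.map c).eval v := by
      rw [hφs (c v), ← conj_eval' S (c v), hcc]
    have hQ1 : c (φ (N + 1) (c v)) = (Q.map c).eval v := by
      rw [hQ (c v), ← conj_eval' Q (c v), hcc]
    rw [hsum, hφs1, hQ1, hφs u, hQ u, hcc] at h0
    rw [h0]
    have hne : (1 : ℂ) - v * u ≠ 0 := sub_ne_zero_of_ne (Ne.symm huv)
    field_simp
  -- Step B : identity everywhere, by density
  have key : ∀ u v : ℂ,
      (1 - v * u) * ∑ j ∈ range (N + 1), (P j).eval u * ((P j).map c).eval v =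
      ((S.map c).eval v) * S.eval u - ((Q.map c).eval v) * Q.eval u := by
    intro u
    have hd : Dense {v : ℂ | v * u ≠ 1} := by
      apply Dense.mono _ (dense_compl_singleton u⁻¹)
      intro v hv h
      exact hv (by simp [eq_inv_of_mul_eq_one_left h, (by rintro rfl; simp at h : u ≠ 0)])
    have h1 : Continuous fun v : ℂ =>
        (1 - v * u) * ∑ j ∈ range (N + 1), (P j).eval u * ((P j).map c).eval v :=
      (continuous_const.sub (continuous_id.mul continuous_const)).mul
        (continuous_finset_sum _ fun j _ => continuous_const.mul (((P j).map c).continuous))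
    have h2 : Continuous fun v : ℂ =>
        ((S.map c).eval v) * S.eval u - ((Q.map c).eval v) * Q.eval u :=
      ((S.map c).continuous.mul continuous_const).sub
        (((Q.map c).continuous).mul continuous_const)
    exact fun v => congrFun (h1.ext_on hd h2 (fun v hv => hA u v hv)) v
  -- Step C : differentiate in u
  have keyC : ∀ u v : ℂ,
      (-v) * (∑ j ∈ range (N + 1), (P j).eval u * ((P j).map c).eval v)
      + (1 - v * u) * ∑ j ∈ range (N + 1), (P j).derivative.eval u * ((P j).map c).eval v =
      ((S.map c).eval v) * S.derivative.eval u - ((Q.map c).eval v) * Q.derivative.eval u := by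
    intro u v
    have h1 : HasDerivAt (fun u : ℂ =>
        (1 - v * u) * ∑ j ∈ range (N + 1), (P j).eval u * ((P j).map c).eval v)
        ((-v) * (∑ j ∈ range (N + 1), (P j).eval u * ((P j).map c).eval v)
          + (1 - v * u) * ∑ j ∈ range (N + 1),
              (P j).derivative.eval u * ((P j).map c).eval v) u := by
      have ha : HasDerivAt (fun u : ℂ => 1 - v * u) (-v) u := by
        simpa using ((hasDerivAt_id u).const_mul v).const_sub 1
      have hb : HasDerivAt (fun u : ℂ =>
          ∑ j ∈ range (N + 1), (P j).eval u * ((P j).map c).eval v)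
          (∑ j ∈ range (N + 1), (P j).derivative.eval u * ((P j).map c).eval v) u :=
        HasDerivAt.fun_sum fun j _ => ((P j).hasDerivAt u).mul_const _
      exact ha.mul hb
    have h2 : HasDerivAt (fun u : ℂ =>
        ((S.map c).eval v) * S.eval u - ((Q.map c).eval v) * Q.eval u)
        (((S.map c).eval v) * S.derivative.eval u
          - ((Q.map c).eval v) * Q.derivative.eval u) u :=
      ((S.hasDerivAt u).const_mul _).sub ((Q.hasDerivAt u).const_mul _)
    have heq : (fun u : ℂ =>
        (1 - v * u) * ∑ j ∈ range (N + 1), (P j).eval u * ((P j).map c).eval v)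
        = fun u : ℂ =>
        ((S.map c).eval v) * S.eval u - ((Q.map c).eval v) * Q.eval u :=
      funext fun u => key u v
    exact (heq ▸ h1).unique h2
  -- Step D : differentiate in v
  have keyD : ∀ u v : ℂ,
      ((-1) * (∑ j ∈ range (N + 1), (P j).eval u * ((P j).map c).eval v)
        + (-v) * (∑ j ∈ range (N + 1), (P j).eval u * ((P j).map c).derivative.eval v))
      + ((-u) * (∑ j ∈ range (N + 1), (P j).derivative.eval u * ((P j).map c).eval v)
        + (1 - v * u) * ∑ j ∈ range (N + 1),
            (P j).derivative.eval u * ((P j).map c).derivative.eval v) =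
      ((S.map c).derivative.eval v) * S.derivative.eval u
        - ((Q.map c).derivative.eval v) * Q.derivative.eval u := by
    intro u v
    have h1 : HasDerivAt (fun v : ℂ =>
        (-v) * (∑ j ∈ range (N + 1), (P j).eval u * ((P j).map c).eval v)
          + (1 - v * u) * ∑ j ∈ range (N + 1),
              (P j).derivative.eval u * ((P j).map c).eval v)
        (((-1) * (∑ j ∈ range (N + 1), (P j).eval u * ((P j).map c).eval v)
          + (-v) * (∑ j ∈ range (N + 1), (P j).eval u * ((P j).map c).derivative.eval v))
        + ((-u) * (∑ j ∈ range (N + 1), (P j).derivative.eval u * ((P j).map c).eval v)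
          + (1 - v * u) * ∑ j ∈ range (N + 1),
              (P j).derivative.eval u * ((P j).map c).derivative.eval v)) v := by
      have hA1 : HasDerivAt (fun v : ℂ =>
          ∑ j ∈ range (N + 1), (P j).eval u * ((P j).map c).eval v)
          (∑ j ∈ range (N + 1), (P j).eval u * ((P j).map c).derivative.eval v) v :=
        HasDerivAt.fun_sum fun j _ => (((P j).map c).hasDerivAt v).const_mul _
      have hB1 : HasDerivAt (fun v : ℂ =>
          ∑ j ∈ range (N + 1), (P j).derivative.eval u * ((P j).map c).eval v)
          (∑ j ∈ range (N + 1), (P j).derivative.eval u * ((P j).map c).derivative.eval v) v :=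
        HasDerivAt.fun_sum fun j _ => (((P j).map c).hasDerivAt v).const_mul _
      have hneg : HasDerivAt (fun v : ℂ => -v) (-1 : ℂ) v := by
        exact hasDerivAt_neg' v
      have hf : HasDerivAt (fun v : ℂ => 1 - v * u) (-u) v := by
        simpa using ((hasDerivAt_id v).mul_const u).const_sub 1
      exact (hneg.mul hA1).add (hf.mul hB1)
    have h2 : HasDerivAt (fun v : ℂ =>
        ((S.map c).eval v) * S.derivative.eval u - ((Q.map c).eval v) * Q.derivative.eval u)
        (((S.map c).derivative.eval v) * S.derivative.eval u
          - ((Q.map c).derivative.eval v) * Q.derivative.eval u) v :=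
      (((S.map c).hasDerivAt v).mul_const _).sub (((Q.map c).hasDerivAt v).mul_const _)
    have heq : (fun v : ℂ =>
        (-v) * (∑ j ∈ range (N + 1), (P j).eval u * ((P j).map c).eval v)
          + (1 - v * u) * ∑ j ∈ range (N + 1),
              (P j).derivative.eval u * ((P j).map c).eval v)
        = fun v : ℂ =>
        ((S.map c).eval v) * S.derivative.eval u - ((Q.map c).eval v) * Q.derivative.eval u :=
      funext fun v => keyC u v
    exact (heq ▸ h1).unique h2
  -- specialize at (z, conj z) and translate
  have E := keyD z (c z)
  -- translation lemmas
  have hPz : ∀ j ∈ range (N + 1), (P j).eval z = φ j z := fun j hj =>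
    (hP j (mem_range.mp hj).le z).symm
  have hderiv : ∀ j ∈ range (N + 1), deriv (φ j) z = (P j).derivative.eval z := by
    intro j hj
    have : φ j = fun y => (P j).eval y := funext fun y => hP j (mem_range.mp hj).le y
    rw [this, Polynomial.deriv]
  have hderivS : deriv φs z = S.derivative.eval z := by
    have : φs = fun y => S.eval y := funext fun y => hφs y
    rw [this, Polynomial.deriv]
  have hderivQ : deriv (φ (N + 1)) z = Q.derivative.eval z := by
    have : φ (N + 1) = fun y => Q.eval y := funext fun y => hQ y
    rw [this, Polynomial.deriv]
  -- rewrite the conjugate evaluations in E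
  have e1 : ∀ p : Polynomial ℂ, (p.map c).eval (c z) = c (p.eval z) := fun p => conj_eval' p z
  have e2 : ∀ p : Polynomial ℂ, (p.map c).derivative.eval (c z) = c (p.derivative.eval z) := by
    intro p
    rw [Polynomial.derivative_map, conj_eval']
  simp only [e2] at E
  simp only [e1] at E
  rw [hderivS, hderivQ]
  rw [show ∑ j ∈ Finset.range (N + 1), ‖deriv (φ j) z‖ ^ 2
      = ∑ j ∈ Finset.range (N + 1), ‖(P j).derivative.eval z‖ ^ 2 from
    Finset.sum_congr rfl fun j hj => by rw [hderiv j hj]]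
  rw [show (∑ j ∈ Finset.range (N + 1), c (φ j z) * deriv (φ j) z)
      = ∑ j ∈ Finset.range (N + 1), c ((P j).eval z) * (P j).derivative.eval z from
    Finset.sum_congr rfl fun j hj => by rw [hderiv j hj, hP j (mem_range.mp hj).le z]]
  rw [show ∑ j ∈ Finset.range (N + 1), ‖φ j z‖ ^ 2
      = ∑ j ∈ Finset.range (N + 1), ‖(P j).eval z‖ ^ 2 from
    Finset.sum_congr rfl fun j hj => by rw [hP j (mem_range.mp hj).le z]]
  exact final_algebra (N + 1) (fun j => (P j).eval z) (fun j => (P j).derivative.eval z)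
    (S.derivative.eval z) (Q.derivative.eval z) z hz E
end

section
/- Let N ∈ ℕ and let φ_0,…,φ_{N+1} : ℂ → ℂ be polynomial functions, with φ*_{N+1} the reciprocal polynomial of φ_{N+1} of degree bound N+1 (the coefficient of z^j in φ*_{N+1} is the complex conjugate of the coefficient of z^{N+1−j} in φ_{N+1}), such that the Christoffel–Darboux formula on the unit circle holds: for all z, w ∈ ℂ with conj(w)·z ≠ 1, Σ_{j=0}^N φ_j(z)·conj(φ_j(w)) = (conj(φ*_{N+1}(w))·φ*_{N+1}(z) − conj(φ_{N+1}(w))·φ_{N+1}(z))/(1 − conj(w)·z). Then for every z ∈ ℂ with |z| ≠ 1, writing B_{0,N}(z) = Σ_{j=0}^N |φ_j(z)|², B_{1,N}(z) = Σ_{j=0}^N conj(φ_j(z))·φ_j′(z), B_{2,N}(z) = Σ_{j=0}^N |φ_j′(z)|², one has B_{0,N}(z)·B_{2,N}(z) − |B_{1,N}(z)|² = (|φ*_{N+1}(z)|² − |φ_{N+1}(z)|²)²/(1 − |z|²)⁴ − |φ*_{N+1}(z)·φ_{N+1}′(z) − φ*_{N+1}′(z)·φ_{N+1}(z)|²/(1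 − |z|²)². -/
open Finset Polynomial

private lemma mapStar_eval (p : Polynomial ℂ) (x : ℂ) :
    (p.map (starRingEnd ℂ)).eval x = (starRingEnd ℂ) (p.eval ((starRingEnd ℂ) x)) := by
  conv_lhs => rw [show x = (starRingEnd ℂ) ((starRingEnd ℂ) x) by simp]
  rw [Polynomial.eval_map, Polynomial.eval₂_hom]

/-- `B₀,N·B₂,N − |B₁,N|²` for polynomials orthonormal on the unit circle. -/
theorem CD_unit_circle_B0B2_sub_B1sq
    (N : ℕ) (φ : ℕ → ℂ → ℂ) (φs : ℂ → ℂ) (Q : Polynomial ℂ)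
    (hpoly : ∀ j ≤ N + 1, ∃ q : Polynomial ℂ, ∀ z : ℂ, φ j z = Polynomial.eval z q)
    (hQ : ∀ z : ℂ, φ (N + 1) z = Polynomial.eval z Q)
    (hφs : ∀ z : ℂ, φs z =
      Polynomial.eval z (Polynomial.reflect (N + 1) (Q.map (starRingEnd ℂ))))
    (hCD : ∀ z w : ℂ, (starRingEnd ℂ) w * z ≠ 1 →
      ∑ j ∈ Finset.range (N + 1), φ j z * (starRingEnd ℂ) (φ j w) =
        ((starRingEnd ℂ) (φs w) * φs z -
          (starRingEnd ℂ) (φ (N + 1) w) * φ (N + 1) z) /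
          (1 - (starRingEnd ℂ) w * z))
    (z : ℂ) (hz : ‖z‖ ≠ 1)
    :
    (∑ j ∈ Finset.range (N + 1), ‖φ j z‖ ^ 2) *
        (∑ j ∈ Finset.range (N + 1), ‖deriv (φ j) z‖ ^ 2) -
      ‖∑ j ∈ Finset.range (N + 1),
          (starRingEnd ℂ) (φ j z) * deriv (φ j) z‖ ^ 2 =
      (‖φs z‖ ^ 2 - ‖φ (N + 1) z‖ ^ 2) ^ 2 /
        (1 - ‖z‖ ^ 2) ^ 4 -
      ‖φs z * deriv (φ (N + 1)) z - deriv φs z * φ (N + 1) z‖ ^ 2 /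
        (1 - ‖z‖ ^ 2) ^ 2 := by
  classical
  choose! P hP using hpoly
  set Ps := Polynomial.reflect (N + 1) (Q.map (starRingEnd ℂ)) with hPsdef
  -- Step 1: the multiplied-out CD identity
  have hd : ∀ z' u : ℂ, u * z' ≠ 1 →
      (1 - u * z') * ∑ j ∈ range (N + 1), (P j).eval z' * ((P j).map (starRingEnd ℂ)).eval u
        = (Ps.map (starRingEnd ℂ)).eval u * Ps.eval z' - (Q.map (starRingEnd ℂ)).eval u * Q.eval z' := by
    intro z' u h
    have h2 := hCD z' ((starRingEnd ℂ) u) (by simpa using h)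
    have e1 : ∀ j ∈ range (N + 1), φ j z' * (starRingEnd ℂ) (φ j ((starRingEnd ℂ) u))
        = (P j).eval z' * ((P j).map (starRingEnd ℂ)).eval u := by
      intro j hj
      rw [mapStar_eval, hP j (mem_range.mp hj).le z', hP j (mem_range.mp hj).le ((starRingEnd ℂ) u)]
    rw [Finset.sum_congr rfl e1, hφs, hQ, hQ, hφs] at h2
    rw [show (starRingEnd ℂ) ((starRingEnd ℂ) u) = u by simp,
      show (starRingEnd ℂ) (Ps.eval ((starRingEnd ℂ) u)) = (Ps.map (starRingEnd ℂ)).eval u from (mapStar_eval _ _).symm,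
      show (starRingEnd ℂ) (Q.eval ((starRingEnd ℂ) u)) = (Q.map (starRingEnd ℂ)).eval u from (mapStar_eval _ _).symm] at h2
    have hne : (1 : ℂ) - u * z' ≠ 0 := sub_ne_zero.mpr (Ne.symm h)
    rw [eq_div_iff hne] at h2
    linear_combination h2
  -- Step 2: ∂/∂z' of the identity
  have hdz : ∀ z' u : ℂ, u * z' ≠ 1 →
      (-u) * (∑ j ∈ range (N + 1), (P j).eval z' * ((P j).map (starRingEnd ℂ)).eval u)
        + (1 - u * z') * (∑ j ∈ range (N + 1), (derivative (P j)).eval z' * ((P j).map (starRingEnd ℂ)).eval u)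
        = (Ps.map (starRingEnd ℂ)).eval u * (derivative Ps).eval z'
          - (Q.map (starRingEnd ℂ)).eval u * (derivative Q).eval z' := by
    intro z₀ u h
    have hev : (fun z' => (1 - u * z') * ∑ j ∈ range (N + 1), (P j).eval z' * ((P j).map (starRingEnd ℂ)).eval u)
        =ᶠ[nhds z₀] (fun z' => (Ps.map (starRingEnd ℂ)).eval u * Ps.eval z' - (Q.map (starRingEnd ℂ)).eval u * Q.eval z') := by
      have hcont : ContinuousAt (fun z' : ℂ => u * z') z₀ :=
        (continuous_const.mul continuous_id).continuousAt
      filter_upwards [hcont.eventually_ne h] with z' hz' using hd z' u hz'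
    have h1 : HasDerivAt (fun z' : ℂ => 1 - u * z') (-u) z₀ := by
      simpa using ((hasDerivAt_id z₀).const_mul u).const_sub 1
    have h2 : HasDerivAt (fun z' => ∑ j ∈ range (N + 1), (P j).eval z' * ((P j).map (starRingEnd ℂ)).eval u)
        (∑ j ∈ range (N + 1), (derivative (P j)).eval z₀ * ((P j).map (starRingEnd ℂ)).eval u) z₀ :=
      HasDerivAt.fun_sum fun j _ => ((P j).hasDerivAt z₀).mul_const _
    have hL := h1.mul h2
    have hR : HasDerivAt (fun z' => (Ps.map (starRingEnd ℂ)).eval u * Ps.eval z' - (Q.map (starRingEnd ℂ)).eval u * Q.eval z')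
        ((Ps.map (starRingEnd ℂ)).eval u * (derivative Ps).eval z₀ - (Q.map (starRingEnd ℂ)).eval u * (derivative Q).eval z₀)
        z₀ := ((Ps.hasDerivAt z₀).const_mul _).sub ((Q.hasDerivAt z₀).const_mul _)
    calc (-u) * (∑ j ∈ range (N + 1), (P j).eval z₀ * ((P j).map (starRingEnd ℂ)).eval u)
          + (1 - u * z₀) * (∑ j ∈ range (N + 1), (derivative (P j)).eval z₀ * ((P j).map (starRingEnd ℂ)).eval u)
        = deriv (fun z' => (1 - u * z') *
            ∑ j ∈ range (N + 1), (P j).eval z' * ((P j).map (starRingEnd ℂ)).eval u) z₀ := hL.deriv.symm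
      _ = deriv (fun z' => (Ps.map (starRingEnd ℂ)).eval u * Ps.eval z' - (Q.map (starRingEnd ℂ)).eval u * Q.eval z') z₀ :=
          hev.deriv_eq
      _ = _ := hR.deriv
  -- the special point u₀ = conj z
  have habs : Complex.normSq z ≠ 1 := by
    intro h; exact hz (by rw [Complex.norm_def, h, Real.sqrt_one])
  have hne : (starRingEnd ℂ) z * z ≠ 1 := by
    rw [← Complex.normSq_eq_conj_mul_self]
    exact fun h => habs (by exact_mod_cast h)
  have hd0 : (1 : ℂ) - (starRingEnd ℂ) z * z ≠ 0 := sub_ne_zero.mpr (Ne.symm hne)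
  -- Step 3: ∂/∂u of the identity at (z, conj z)
  have hdu :
      (-z) * (∑ j ∈ range (N + 1), (P j).eval z * ((P j).map (starRingEnd ℂ)).eval ((starRingEnd ℂ) z))
        + (1 - (starRingEnd ℂ) z * z) * (∑ j ∈ range (N + 1), (P j).eval z * (derivative ((P j).map (starRingEnd ℂ))).eval ((starRingEnd ℂ) z))
        = (derivative (Ps.map (starRingEnd ℂ))).eval ((starRingEnd ℂ) z) * Ps.eval z
          - (derivative (Q.map (starRingEnd ℂ))).eval ((starRingEnd ℂ) z) * Q.eval z := by
    have hev : (fun u => (1 - u * z) * ∑ j ∈ range (N + 1), (P j).eval z * ((P j).map (starRingEnd ℂ)).eval u)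
        =ᶠ[nhds ((starRingEnd ℂ) z)] (fun u => (Ps.map (starRingEnd ℂ)).eval u * Ps.eval z - (Q.map (starRingEnd ℂ)).eval u * Q.eval z) := by
      have hcont : ContinuousAt (fun u : ℂ => u * z) ((starRingEnd ℂ) z) :=
        (continuous_id.mul continuous_const).continuousAt
      filter_upwards [hcont.eventually_ne hne] with u hu using hd z u hu
    have h1 : HasDerivAt (fun u : ℂ => 1 - u * z) (-z) ((starRingEnd ℂ) z) := by
      simpa using ((hasDerivAt_id ((starRingEnd ℂ) z)).mul_const z).const_sub 1
    have h2 : HasDerivAt (fun u => ∑ j ∈ range (N + 1), (P j).eval z * ((P j).map (starRingEnd ℂ)).eval u)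
        (∑ j ∈ range (N + 1), (P j).eval z * (derivative ((P j).map (starRingEnd ℂ))).eval ((starRingEnd ℂ) z)) ((starRingEnd ℂ) z) :=
      HasDerivAt.fun_sum fun j _ => (((P j).map (starRingEnd ℂ)).hasDerivAt ((starRingEnd ℂ) z)).const_mul _
    have hL := h1.mul h2
    have hR : HasDerivAt (fun u => (Ps.map (starRingEnd ℂ)).eval u * Ps.eval z - (Q.map (starRingEnd ℂ)).eval u * Q.eval z)
        ((derivative (Ps.map (starRingEnd ℂ))).eval ((starRingEnd ℂ) z) * Ps.eval z
          - (derivative (Q.map (starRingEnd ℂ))).eval ((starRingEnd ℂ) z) * Q.eval z) ((starRingEnd ℂ) z) :=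
      (((Ps.map (starRingEnd ℂ)).hasDerivAt ((starRingEnd ℂ) z)).mul_const _).sub (((Q.map (starRingEnd ℂ)).hasDerivAt ((starRingEnd ℂ) z)).mul_const _)
    calc (-z) * (∑ j ∈ range (N + 1), (P j).eval z * ((P j).map (starRingEnd ℂ)).eval ((starRingEnd ℂ) z))
          + (1 - (starRingEnd ℂ) z * z) * (∑ j ∈ range (N + 1), (P j).eval z * (derivative ((P j).map (starRingEnd ℂ))).eval ((starRingEnd ℂ) z))
        = deriv (fun u => (1 - u * z) *
            ∑ j ∈ range (N + 1), (P j).eval z * ((P j).map (starRingEnd ℂ)).eval u) ((starRingEnd ℂ) z) := hL.deriv.symm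
      _ = deriv (fun u => (Ps.map (starRingEnd ℂ)).eval u * Ps.eval z - (Q.map (starRingEnd ℂ)).eval u * Q.eval z) ((starRingEnd ℂ) z) :=
          hev.deriv_eq
      _ = _ := hR.deriv
  -- Step 4: ∂²/∂z'∂u at (z, conj z)
  have hduz :
      ((-1) * (∑ j ∈ range (N + 1), (P j).eval z * ((P j).map (starRingEnd ℂ)).eval ((starRingEnd ℂ) z))
        + (-((starRingEnd ℂ) z)) * (∑ j ∈ range (N + 1), (P j).eval z * (derivative ((P j).map (starRingEnd ℂ))).eval ((starRingEnd ℂ) z)))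
        + ((-z) * (∑ j ∈ range (N + 1), (derivative (P j)).eval z * ((P j).map (starRingEnd ℂ)).eval ((starRingEnd ℂ) z))
          + (1 - (starRingEnd ℂ) z * z) * (∑ j ∈ range (N + 1),
              (derivative (P j)).eval z * (derivative ((P j).map (starRingEnd ℂ))).eval ((starRingEnd ℂ) z)))
        = (derivative (Ps.map (starRingEnd ℂ))).eval ((starRingEnd ℂ) z) * (derivative Ps).eval z
          - (derivative (Q.map (starRingEnd ℂ))).eval ((starRingEnd ℂ) z) * (derivative Q).eval z := by
    have hev : (fun u => (-u) * (∑ j ∈ range (N + 1), (P j).eval z * ((P j).map (starRingEnd ℂ)).eval u)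
          + (1 - u * z) * (∑ j ∈ range (N + 1), (derivative (P j)).eval z * ((P j).map (starRingEnd ℂ)).eval u))
        =ᶠ[nhds ((starRingEnd ℂ) z)] (fun u => (Ps.map (starRingEnd ℂ)).eval u * (derivative Ps).eval z
          - (Q.map (starRingEnd ℂ)).eval u * (derivative Q).eval z) := by
      have hcont : ContinuousAt (fun u : ℂ => u * z) ((starRingEnd ℂ) z) :=
        (continuous_id.mul continuous_const).continuousAt
      filter_upwards [hcont.eventually_ne hne] with u hu using hdz z u hu
    have hn : HasDerivAt (fun u : ℂ => -u) (-1) ((starRingEnd ℂ) z) := (hasDerivAt_id ((starRingEnd ℂ) z)).neg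
    have h2 : HasDerivAt (fun u => ∑ j ∈ range (N + 1), (P j).eval z * ((P j).map (starRingEnd ℂ)).eval u)
        (∑ j ∈ range (N + 1), (P j).eval z * (derivative ((P j).map (starRingEnd ℂ))).eval ((starRingEnd ℂ) z)) ((starRingEnd ℂ) z) :=
      HasDerivAt.fun_sum fun j _ => (((P j).map (starRingEnd ℂ)).hasDerivAt ((starRingEnd ℂ) z)).const_mul _
    have h1 : HasDerivAt (fun u : ℂ => 1 - u * z) (-z) ((starRingEnd ℂ) z) := by
      simpa using ((hasDerivAt_id ((starRingEnd ℂ) z)).mul_const z).const_sub 1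
    have h3 : HasDerivAt (fun u => ∑ j ∈ range (N + 1), (derivative (P j)).eval z * ((P j).map (starRingEnd ℂ)).eval u)
        (∑ j ∈ range (N + 1), (derivative (P j)).eval z * (derivative ((P j).map (starRingEnd ℂ))).eval ((starRingEnd ℂ) z))
        ((starRingEnd ℂ) z) :=
      HasDerivAt.fun_sum fun j _ => (((P j).map (starRingEnd ℂ)).hasDerivAt ((starRingEnd ℂ) z)).const_mul _
    have hL := (hn.mul h2).add (h1.mul h3)
    have hR : HasDerivAt (fun u => (Ps.map (starRingEnd ℂ)).eval u * (derivative Ps).eval z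
          - (Q.map (starRingEnd ℂ)).eval u * (derivative Q).eval z)
        ((derivative (Ps.map (starRingEnd ℂ))).eval ((starRingEnd ℂ) z) * (derivative Ps).eval z
          - (derivative (Q.map (starRingEnd ℂ))).eval ((starRingEnd ℂ) z) * (derivative Q).eval z) ((starRingEnd ℂ) z) :=
      (((Ps.map (starRingEnd ℂ)).hasDerivAt ((starRingEnd ℂ) z)).mul_const _).sub (((Q.map (starRingEnd ℂ)).hasDerivAt ((starRingEnd ℂ) z)).mul_const _)
    calc ((-1) * (∑ j ∈ range (N + 1), (P j).eval z * ((P j).map (starRingEnd ℂ)).eval ((starRingEnd ℂ) z))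
          + (-((starRingEnd ℂ) z)) * (∑ j ∈ range (N + 1), (P j).eval z * (derivative ((P j).map (starRingEnd ℂ))).eval ((starRingEnd ℂ) z)))
          + ((-z) * (∑ j ∈ range (N + 1), (derivative (P j)).eval z * ((P j).map (starRingEnd ℂ)).eval ((starRingEnd ℂ) z))
            + (1 - (starRingEnd ℂ) z * z) * (∑ j ∈ range (N + 1),
                (derivative (P j)).eval z * (derivative ((P j).map (starRingEnd ℂ))).eval ((starRingEnd ℂ) z)))
        = deriv (fun u => (-u) * (∑ j ∈ range (N + 1), (P j).eval z * ((P j).map (starRingEnd ℂ)).eval u)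
            + (1 - u * z) * (∑ j ∈ range (N + 1), (derivative (P j)).eval z * ((P j).map (starRingEnd ℂ)).eval u))
            ((starRingEnd ℂ) z) := hL.deriv.symm
      _ = deriv (fun u => (Ps.map (starRingEnd ℂ)).eval u * (derivative Ps).eval z
            - (Q.map (starRingEnd ℂ)).eval u * (derivative Q).eval z) ((starRingEnd ℂ) z) := hev.deriv_eq
      _ = _ := hR.deriv

  -- Step 5: translate polynomial evaluations back to φ
  have hzz : (starRingEnd ℂ) ((starRingEnd ℂ) z) = z := Complex.conj_conj z
  have hste : ∀ p : Polynomial ℂ, (p.map (starRingEnd ℂ)).eval ((starRingEnd ℂ) z)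
      = (starRingEnd ℂ) (p.eval z) := by
    intro p; rw [mapStar_eval, hzz]
  have hstd : ∀ p : Polynomial ℂ, (derivative (p.map (starRingEnd ℂ))).eval ((starRingEnd ℂ) z)
      = (starRingEnd ℂ) ((derivative p).eval z) := by
    intro p; rw [Polynomial.derivative_map]; exact hste _
  have hval : ∀ j ∈ range (N + 1), (P j).eval z = φ j z :=
    fun j hj => (hP j (mem_range.mp hj).le z).symm
  have hder : ∀ j ∈ range (N + 1), (derivative (P j)).eval z = deriv (φ j) z := by
    intro j hj
    have hf : φ j = fun w => (P j).eval w := funext (hP j (mem_range.mp hj).le)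
    rw [hf, Polynomial.deriv]
  have hφsv : φs z = Ps.eval z := hφs z
  have hφsd : deriv φs z = (derivative Ps).eval z := by
    have hf : φs = fun w => Ps.eval w := funext hφs
    rw [hf, Polynomial.deriv]
  have hQv : φ (N + 1) z = Q.eval z := hQ z
  have hQd : deriv (φ (N + 1)) z = (derivative Q).eval z := by
    have hf : φ (N + 1) = fun w => Q.eval w := funext hQ
    rw [hf, Polynomial.deriv]
  have hs0 : ∑ j ∈ range (N + 1),
        (P j).eval z * ((P j).map (starRingEnd ℂ)).eval ((starRingEnd ℂ) z)
      = ∑ j ∈ range (N + 1), (starRingEnd ℂ) (φ j z) * φ j z :=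
    Finset.sum_congr rfl fun j hj => by rw [hste, hval j hj]; ring
  have hs1 : ∑ j ∈ range (N + 1),
        (derivative (P j)).eval z * ((P j).map (starRingEnd ℂ)).eval ((starRingEnd ℂ) z)
      = ∑ j ∈ range (N + 1), (starRingEnd ℂ) (φ j z) * deriv (φ j) z :=
    Finset.sum_congr rfl fun j hj => by rw [hste, hval j hj, hder j hj]; ring
  have hs2 : ∑ j ∈ range (N + 1),
        (P j).eval z * (derivative ((P j).map (starRingEnd ℂ))).eval ((starRingEnd ℂ) z)
      = ∑ j ∈ range (N + 1), φ j z * (starRingEnd ℂ) (deriv (φ j) z) :=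
    Finset.sum_congr rfl fun j hj => by rw [hstd, hval j hj, hder j hj]
  have hs3 : ∑ j ∈ range (N + 1),
        (derivative (P j)).eval z * (derivative ((P j).map (starRingEnd ℂ))).eval ((starRingEnd ℂ) z)
      = ∑ j ∈ range (N + 1), (starRingEnd ℂ) (deriv (φ j) z) * deriv (φ j) z :=
    Finset.sum_congr rfl fun j hj => by rw [hstd, hder j hj]; ring
  have E0 := hd z ((starRingEnd ℂ) z) hne
  rw [hs0, hste, hste, ← hφsv, ← hQv] at E0
  have E1 := hdz z ((starRingEnd ℂ) z) hne
  rw [hs0, hs1, hste, hste, ← hφsv, ← hQv, ← hφsd, ← hQd] at E1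
  have E2 := hdu
  rw [hs0, hs2, hstd, hstd, ← hφsv, ← hQv, ← hφsd, ← hQd] at E2
  have E3 := hduz
  rw [hs0, hs1, hs2, hs3, hstd, hstd, ← hφsd, ← hQd] at E3
  -- Step 6: algebra
  have hconj : (starRingEnd ℂ) (∑ j ∈ range (N + 1), (starRingEnd ℂ) (φ j z) * deriv (φ j) z)
      = ∑ j ∈ range (N + 1), φ j z * (starRingEnd ℂ) (deriv (φ j) z) := by
    rw [map_sum]
    exact Finset.sum_congr rfl fun j _ => by rw [map_mul, Complex.conj_conj]
  have hT : (starRingEnd ℂ) (φs z * deriv (φ (N + 1)) z - deriv φs z * φ (N + 1) z)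
      = (starRingEnd ℂ) (φs z) * (starRingEnd ℂ) (deriv (φ (N + 1)) z)
        - (starRingEnd ℂ) (deriv φs z) * (starRingEnd ℂ) (φ (N + 1) z) := by
    rw [map_sub, map_mul, map_mul]
  have k0 : (∑ j ∈ range (N + 1), (starRingEnd ℂ) (φ j z) * φ j z)
      = ((starRingEnd ℂ) (φs z) * φs z - (starRingEnd ℂ) (φ (N + 1) z) * φ (N + 1) z)
        / (1 - (starRingEnd ℂ) z * z) := by
    rw [eq_div_iff hd0]; linear_combination E0
  have k1 : (∑ j ∈ range (N + 1), (starRingEnd ℂ) (φ j z) * deriv (φ j) z)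
      = ((1 - (starRingEnd ℂ) z * z) *
          ((starRingEnd ℂ) (φs z) * deriv φs z - (starRingEnd ℂ) (φ (N + 1) z) * deriv (φ (N + 1)) z)
        + (starRingEnd ℂ) z *
          ((starRingEnd ℂ) (φs z) * φs z - (starRingEnd ℂ) (φ (N + 1) z) * φ (N + 1) z))
        / (1 - (starRingEnd ℂ) z * z) ^ 2 := by
    rw [eq_div_iff (pow_ne_zero 2 hd0)]
    linear_combination (1 - (starRingEnd ℂ) z * z) * E1 + (starRingEnd ℂ) z * E0
  have k2 : (∑ j ∈ range (N + 1), φ j z * (starRingEnd ℂ) (deriv (φ j) z))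
      = ((1 - (starRingEnd ℂ) z * z) *
          ((starRingEnd ℂ) (deriv φs z) * φs z - (starRingEnd ℂ) (deriv (φ (N + 1)) z) * φ (N + 1) z)
        + z * ((starRingEnd ℂ) (φs z) * φs z - (starRingEnd ℂ) (φ (N + 1) z) * φ (N + 1) z))
        / (1 - (starRingEnd ℂ) z * z) ^ 2 := by
    rw [eq_div_iff (pow_ne_zero 2 hd0)]
    linear_combination (1 - (starRingEnd ℂ) z * z) * E2 + z * E0
  have k3 : (∑ j ∈ range (N + 1), (starRingEnd ℂ) (deriv (φ j) z) * deriv (φ j) z)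
      = ((1 - (starRingEnd ℂ) z * z) ^ 2 *
          ((starRingEnd ℂ) (deriv φs z) * deriv φs z
            - (starRingEnd ℂ) (deriv (φ (N + 1)) z) * deriv (φ (N + 1)) z)
        + (1 - (starRingEnd ℂ) z * z) *
          ((starRingEnd ℂ) (φs z) * φs z - (starRingEnd ℂ) (φ (N + 1) z) * φ (N + 1) z)
        + (starRingEnd ℂ) z * (1 - (starRingEnd ℂ) z * z) *
          ((starRingEnd ℂ) (deriv φs z) * φs z - (starRingEnd ℂ) (deriv (φ (N + 1)) z) * φ (N + 1) z)
        + z * (1 - (starRingEnd ℂ) z * z) *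
          ((starRingEnd ℂ) (φs z) * deriv φs z - (starRingEnd ℂ) (φ (N + 1) z) * deriv (φ (N + 1)) z)
        + 2 * (starRingEnd ℂ) z * z *
          ((starRingEnd ℂ) (φs z) * φs z - (starRingEnd ℂ) (φ (N + 1) z) * φ (N + 1) z))
        / (1 - (starRingEnd ℂ) z * z) ^ 3 := by
    rw [eq_div_iff (pow_ne_zero 3 hd0)]
    linear_combination (1 - (starRingEnd ℂ) z * z) ^ 2 * E3
      + (1 - (starRingEnd ℂ) z * z) * E0
      + (starRingEnd ℂ) z * (1 - (starRingEnd ℂ) z * z) * E2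
      + z * (1 - (starRingEnd ℂ) z * z) * E1
      + 2 * (starRingEnd ℂ) z * z * E0
  -- Step 7: convert the real goal to ℂ
  simp only [Complex.sq_norm]
  rw [← Complex.ofReal_inj]
  push_cast
  simp only [Complex.normSq_eq_conj_mul_self]
  rw [hconj, hT, k0, k1, k2, k3]
  field_simp
  ring
end

section
/- Let N ∈ ℕ and let φ_0,…,φ_{N+1} : ℂ → ℂ be polynomial functions, with φ*_{N+1} the reciprocal polynomial of φ_{N+1} of degree bound N+1 (the coefficient of z^j in φ*_{N+1} is the complex conjugate of the coefficient of z^{N+1−j} in φ_{N+1}), such that the Christoffel–Darboux formula on the unit circle holds: for all z, w ∈ ℂ with conj(w)·z ≠ 1, Σ_{j=0}^N φ_j(z)·conj(φ_j(w)) = (conj(φ*_{N+1}(w))·φ*_{N+1}(z) − conj(φ_{N+1}(w))·φ_{N+1}(z))/(1 − conj(w)·z). Then for every z ∈ ℂ with |z| ≠ 1 and |φ*_{N+1}(z)|² − |φ_{N+1}(z)|² ≠ 0, writing B_{0,N}(z) = Σ_{j=0}^N |φ_j(z)|² and B_{1,N}(z) = Σ_{j=0}^N conj(φ_j(z))·φ_j′(z),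 one has |B_{1,N}(z)|²/B_{0,N}(z)³ = (1 − |z|²)·|conj(φ*_{N+1}′(z))·φ*_{N+1}(z) − conj(φ_{N+1}′(z))·φ_{N+1}(z)|²/(|φ*_{N+1}(z)|² − |φ_{N+1}(z)|²)³ + 2·Re(z·(φ*_{N+1}′(z)·conj(φ*_{N+1}(z)) − φ_{N+1}′(z)·conj(φ_{N+1}(z))))/(|φ*_{N+1}(z)|² − |φ_{N+1}(z)|²)² + |z|²/((1 − |z|²)·(|φ*_{N+1}(z)|² − |φ_{N+1}(z)|²)). -/
open Finset

/-- `|B₁,N(z)|²/B₀,N(z)³` for polynomials orthonormal on the unit circle. -/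
theorem CD_unit_circle_B1sq_div_B0cubed
    (N : ℕ) (φ : ℕ → ℂ → ℂ) (φs : ℂ → ℂ) (Q : Polynomial ℂ)
    (hpoly : ∀ j ≤ N + 1, ∃ q : Polynomial ℂ, ∀ z : ℂ, φ j z = Polynomial.eval z q)
    (hQ : ∀ z : ℂ, φ (N + 1) z = Polynomial.eval z Q)
    (hφs : ∀ z : ℂ, φs z =
      Polynomial.eval z (Polynomial.reflect (N + 1) (Q.map (starRingEnd ℂ))))
    (hCD : ∀ z w : ℂ, (starRingEnd ℂ) w * z ≠ 1 →
      ∑ j ∈ Finset.range (N + 1), φ j z * (starRingEnd ℂ) (φ j w) =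
        ((starRingEnd ℂ) (φs w) * φs z -
          (starRingEnd ℂ) (φ (N + 1) w) * φ (N + 1) z) /
          (1 - (starRingEnd ℂ) w * z))
    (z : ℂ) (hz : ‖z‖ ≠ 1)
    (hA : ‖φs z‖ ^ 2 - ‖φ (N + 1) z‖ ^ 2 ≠ 0) :
    ‖∑ j ∈ Finset.range (N + 1),
        (starRingEnd ℂ) (φ j z) * deriv (φ j) z‖ ^ 2 /
      (∑ j ∈ Finset.range (N + 1), ‖φ j z‖ ^ 2) ^ 3 =
      (1 - ‖z‖ ^ 2) *
          ‖(starRingEnd ℂ) (deriv φs z) * φs z -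
            (starRingEnd ℂ) (deriv (φ (N + 1)) z) * φ (N + 1) z‖ ^ 2 /
        (‖φs z‖ ^ 2 - ‖φ (N + 1) z‖ ^ 2) ^ 3 +
      2 * (z * (deriv φs z * (starRingEnd ℂ) (φs z) -
            deriv (φ (N + 1)) z * (starRingEnd ℂ) (φ (N + 1) z))).re /
        (‖φs z‖ ^ 2 - ‖φ (N + 1) z‖ ^ 2) ^ 2 +
      ‖z‖ ^ 2 /
        ((1 - ‖z‖ ^ 2) *
          (‖φs z‖ ^ 2 - ‖φ (N + 1) z‖ ^ 2)) := by
  classical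
  set r : ℝ := ‖z‖ ^ 2 with hrdef
  set A : ℝ := ‖φs z‖ ^ 2 - ‖φ (N + 1) z‖ ^ 2 with hAdef
  have hzz : (starRingEnd ℂ) z * z = ((r : ℝ) : ℂ) := by
    rw [mul_comm, Complex.mul_conj, hrdef, Complex.sq_norm]
  have hrne : (1 : ℝ) - r ≠ 0 := by
    intro h
    apply hz
    have h1 : r = 1 := by linarith
    have h0 := norm_nonneg z
    nlinarith [h1]
  have hne1 : (starRingEnd ℂ) z * z ≠ 1 := by
    rw [hzz]
    intro h
    apply hrne
    have : r = 1 := by exact_mod_cast h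
    linarith
  have hdne : (1 : ℂ) - (starRingEnd ℂ) z * z ≠ 0 := by
    rw [hzz]
    intro h
    apply hrne
    have h2 : ((1 - r : ℝ) : ℂ) = 0 := by push_cast; exact h
    exact_mod_cast h2
  -- differentiability
  have hdiff : ∀ j, j ≤ N + 1 → Differentiable ℂ (φ j) := by
    intro j hj
    obtain ⟨q, hqe⟩ := hpoly j hj
    have : φ j = fun x => Polynomial.eval x q := funext hqe
    rw [this]; exact q.differentiable
  have hdiffs : Differentiable ℂ φs := by
    have : φs = fun x => Polynomial.eval x
        (Polynomial.reflect (N + 1) (Q.map (starRingEnd ℂ))) := funext hφs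
    rw [this]; exact Polynomial.differentiable _
  -- the numerator of the CD RHS at w = z equals A
  have hAc : (starRingEnd ℂ) (φs z) * φs z - (starRingEnd ℂ) (φ (N + 1) z) * φ (N + 1) z
      = ((A : ℝ) : ℂ) := by
    rw [hAdef, Complex.sq_norm, Complex.sq_norm,
      mul_comm ((starRingEnd ℂ) (φs z)), mul_comm ((starRingEnd ℂ) (φ (N + 1) z)),
      Complex.mul_conj, Complex.mul_conj]
    push_cast
    ring
  -- B0
  have hB0 : ∑ j ∈ Finset.range (N + 1), ‖φ j z‖ ^ 2 = A / (1 - r) := by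
    have h := hCD z z hne1
    have hl : ∑ j ∈ Finset.range (N + 1), φ j z * (starRingEnd ℂ) (φ j z)
        = ((∑ j ∈ Finset.range (N + 1), ‖φ j z‖ ^ 2 : ℝ) : ℂ) := by
      push_cast
      refine Finset.sum_congr rfl fun j _ => ?_
      rw [Complex.mul_conj]
      norm_cast
      exact (Complex.sq_norm _).symm
    rw [hl, hAc, hzz] at h
    have h2 : ((∑ j ∈ Finset.range (N + 1), ‖φ j z‖ ^ 2 : ℝ) : ℂ)
        = ((A / (1 - r) : ℝ) : ℂ) := by
      rw [h]; push_cast; ring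
    exact_mod_cast h2
  set E : ℂ := (starRingEnd ℂ) (φs z) * deriv φs z
      - (starRingEnd ℂ) (φ (N + 1) z) * deriv (φ (N + 1)) z with hE
  -- B1 via differentiating the CD identity
  have hB1 : ∑ j ∈ Finset.range (N + 1), (starRingEnd ℂ) (φ j z) * deriv (φ j) z
      = (E * ((1 - r : ℝ) : ℂ) + ((A : ℝ) : ℂ) * (starRingEnd ℂ) z) / ((1 - r : ℝ) : ℂ) ^ 2 := by
    have hopen : IsOpen {x : ℂ | (starRingEnd ℂ) z * x ≠ 1} := by
      have he : {x : ℂ | (starRingEnd ℂ) z * x ≠ 1}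
          = (fun x => (starRingEnd ℂ) z * x) ⁻¹' {(1 : ℂ)}ᶜ := rfl
      rw [he]
      exact isOpen_compl_singleton.preimage (continuous_const.mul continuous_id)
    have hmem : z ∈ {x : ℂ | (starRingEnd ℂ) z * x ≠ 1} := hne1
    have hFG : (fun x => ∑ j ∈ Finset.range (N + 1), φ j x * (starRingEnd ℂ) (φ j z))
        =ᶠ[nhds z]
        (fun x => ((starRingEnd ℂ) (φs z) * φs x
          - (starRingEnd ℂ) (φ (N + 1) z) * φ (N + 1) x) / (1 - (starRingEnd ℂ) z * x)) :=
      Filter.eventually_of_mem (hopen.mem_nhds hmem) (fun x hx => hCD x z hx)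
    have hd1 := hFG.deriv_eq
    have hL : deriv (fun x => ∑ j ∈ Finset.range (N + 1), φ j x * (starRingEnd ℂ) (φ j z)) z
        = ∑ j ∈ Finset.range (N + 1), deriv (φ j) z * (starRingEnd ℂ) (φ j z) := by
      rw [deriv_fun_sum (fun j hj =>
        ((hdiff j (Finset.mem_range.mp hj).le).differentiableAt).mul_const _)]
      refine Finset.sum_congr rfl fun j hj => ?_
      exact deriv_mul_const ((hdiff j (Finset.mem_range.mp hj).le).differentiableAt) _
    have hNum : DifferentiableAt ℂ (fun x => (starRingEnd ℂ) (φs z) * φs x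
        - (starRingEnd ℂ) (φ (N + 1) z) * φ (N + 1) x) z :=
      ((hdiffs.differentiableAt).const_mul _).sub
        (((hdiff (N + 1) le_rfl).differentiableAt).const_mul _)
    have hDen : DifferentiableAt ℂ (fun x => (1 : ℂ) - (starRingEnd ℂ) z * x) z :=
      (differentiableAt_const _).sub (differentiableAt_id.const_mul _)
    have hR : deriv (fun x => ((starRingEnd ℂ) (φs z) * φs x
        - (starRingEnd ℂ) (φ (N + 1) z) * φ (N + 1) x) / (1 - (starRingEnd ℂ) z * x)) z
        = (E * (1 - (starRingEnd ℂ) z * z)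
            + ((starRingEnd ℂ) (φs z) * φs z - (starRingEnd ℂ) (φ (N + 1) z) * φ (N + 1) z)
              * (starRingEnd ℂ) z) / (1 - (starRingEnd ℂ) z * z) ^ 2 := by
      rw [deriv_fun_div hNum hDen hdne]
      have h1 : deriv (fun x => (starRingEnd ℂ) (φs z) * φs x
          - (starRingEnd ℂ) (φ (N + 1) z) * φ (N + 1) x) z = E := by
        rw [deriv_fun_sub ((hdiffs.differentiableAt).const_mul _)
            (((hdiff (N + 1) le_rfl).differentiableAt).const_mul _),
          deriv_const_mul _ hdiffs.differentiableAt,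
          deriv_const_mul _ (hdiff (N + 1) le_rfl).differentiableAt, hE]
      have h2 : deriv (fun x => (1 : ℂ) - (starRingEnd ℂ) z * x) z = -(starRingEnd ℂ) z := by
        have h3 : HasDerivAt (fun x : ℂ => (1 : ℂ) - (starRingEnd ℂ) z * x)
            (-((starRingEnd ℂ) z * 1)) z :=
          ((hasDerivAt_id z).const_mul ((starRingEnd ℂ) z)).const_sub 1
        simpa using h3.deriv
      rw [h1, h2]
      ring
    have hsum : ∑ j ∈ Finset.range (N + 1), (starRingEnd ℂ) (φ j z) * deriv (φ j) z
        = ∑ j ∈ Finset.range (N + 1), deriv (φ j) z * (starRingEnd ℂ) (φ j z) :=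
      Finset.sum_congr rfl fun j _ => mul_comm _ _
    rw [hsum, ← hL, hd1, hR, hAc, hzz]
    push_cast
    ring
  -- rewrite the RHS complex pieces
  have hconjE : (starRingEnd ℂ) (deriv φs z) * φs z
      - (starRingEnd ℂ) (deriv (φ (N + 1)) z) * φ (N + 1) z = (starRingEnd ℂ) E := by
    rw [hE]
    simp only [map_sub, map_mul, Complex.conj_conj]
    ring
  have hzE : deriv φs z * (starRingEnd ℂ) (φs z)
      - deriv (φ (N + 1)) z * (starRingEnd ℂ) (φ (N + 1) z) = E := by
    rw [hE]; ring
  rw [hB0, hB1, hconjE, hzE]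
  rw [Complex.norm_conj]
  -- now pure computation
  have habs1 : ‖(E * ((1 - r : ℝ) : ℂ) + ((A : ℝ) : ℂ) * (starRingEnd ℂ) z)
      / ((1 - r : ℝ) : ℂ) ^ 2‖ ^ 2
      = ((E.re * (1 - r) + A * z.re) ^ 2 + (E.im * (1 - r) - A * z.im) ^ 2)
        / ((1 - r) ^ 2) ^ 2 := by
    rw [Complex.sq_norm, map_div₀, map_pow, Complex.normSq_ofReal]
    congr 1
    · simp [Complex.normSq_apply, Complex.add_re, Complex.add_im, Complex.mul_re,
        Complex.mul_im, Complex.conj_re, Complex.conj_im]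
      ring
    · ring
  have habs2 : ‖E‖ ^ 2 = E.re ^ 2 + E.im ^ 2 := by
    rw [Complex.sq_norm, Complex.normSq_apply]; ring
  have hre : (z * E).re = z.re * E.re - z.im * E.im := by
    rw [Complex.mul_re]
  have hrre : r = z.re ^ 2 + z.im ^ 2 := by
    rw [hrdef, Complex.sq_norm, Complex.normSq_apply]; ring
  rw [habs1, habs2, hre]
  rw [hrre] at hrne ⊢
  field_simp
  ring
end
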